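/- arXiv:2303.17045 — 4 statements merged into one kernel-verified Lean document; each statement's English description precedes it below -/
import Mathlib

section
/- Let s₁ < … < s_ℓ (ℓ ≥ 1) be real slopes and let ε > 0 satisfy 3ε|s₁| ≤ 1 and 3ε|s_ℓ| ≤ 1. Then for every i ∈ {1,…,ℓ}, the levee f_{s_i} fits every labeled data point of the selection gadget, i.e., f_{s_i}(x₁,x₂) = y for every labeled point ((x₁,x₂),y) of the selection gadget. -/
/-- The levee with slope `s`, as a piecewise definition. -/
noncomputable def levee (s x₁ x₂ : ℝ) : ℝ :=
  if 2 ≤ |x₂ - s * x₁| then 0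
  else if |x₂ - s * x₁| ≤ 1 then 1
  else if x₂ - s * x₁ < -1 then 2 + x₂ - s * x₁
  else 2 - x₂ + s * x₁

/-- The selection gadget for `ℓ` slopes `s 0 < s 1 < ⋯ < s (ℓ-1)` and parameter `ε`, as a set of
labeled data points `((x₁, x₂), y)`. -/
noncomputable def selGadget (ℓ : ℕ) (s : ℕ → ℝ) (ε : ℝ) : Set ((ℝ × ℝ) × ℝ) :=
  ({((0, -4), 0), ((0, -3), 0), ((0, -2), 0), ((0, -5/3), 1/3), ((0, -4/3), 2/3),
    ((0, -1), 1), ((0, 0), 1), ((0, 1), 1), ((0, 4/3), 2/3), ((0, 5/3), 1/3),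
    ((0, 2), 0), ((0, 3), 0), ((0, 4), 0)} : Set ((ℝ × ℝ) × ℝ)) ∪
  ({((-ε, -4 - ε * s (ℓ - 1)), 0), ((-ε, -3 - ε * s (ℓ - 1)), 0), ((-ε, -2 - ε * s (ℓ - 1)), 0),
    ((-ε, -1 - ε * s 0), 1), ((-ε, 0), 1), ((-ε, 1 - ε * s (ℓ - 1)), 1),
    ((-ε, 2 - ε * s 0), 0), ((-ε, 3 - ε * s 0), 0), ((-ε, 4 - ε * s 0), 0)} : Set ((ℝ × ℝ) × ℝ)) ∪
  ({((ε, -4 + ε * s 0), 0), ((ε, -3 + ε * s 0), 0), ((ε, -2 + ε * s 0), 0),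
    ((ε, -1 + ε * s (ℓ - 1)), 1), ((ε, 0), 1), ((ε, 1 + ε * s 0), 1),
    ((ε, 2 + ε * s (ℓ - 1)), 0), ((ε, 3 + ε * s (ℓ - 1)), 0),
    ((ε, 4 + ε * s (ℓ - 1)), 0)} : Set ((ℝ × ℝ) × ℝ)) ∪
  {q | ∃ i : ℕ, i + 1 < ℓ ∧
      (q = ((-4 / (s (i + 1) - s i), -2 * (s i + s (i + 1)) / (s (i + 1) - s i)), 0) ∨
       q = ((4 / (s (i + 1) - s i), 2 * (s i + s (i + 1)) / (s (i + 1) - s i)), 0))}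

/-- The selection gadget shifted by offset `z` along the `x₂`-axis. -/
noncomputable def selGadgetOff (ℓ : ℕ) (s : ℕ → ℝ) (ε z : ℝ) : Set ((ℝ × ℝ) × ℝ) :=
  (fun q : (ℝ × ℝ) × ℝ => ((q.1.1, q.1.2 + z), q.2)) '' selGadget ℓ s ε

set_option linter.unreachableTactic false
set_option linter.unusedTactic false
set_option linter.deprecated false

lemma lev0 (s x₁ x₂ : ℝ) (h : x₂ - s * x₁ ≤ -2 ∨ 2 ≤ x₂ - s * x₁) :
    levee s x₁ x₂ = 0 := by
  unfold levee
  rw [if_pos]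
  rcases h with h | h
  · rw [abs_of_nonpos (by linarith)]; linarith
  · exact le_trans h (le_abs_self _)

lemma lev1 (s x₁ x₂ : ℝ) (h1 : -1 ≤ x₂ - s * x₁) (h2 : x₂ - s * x₁ ≤ 1) :
    levee s x₁ x₂ = 1 := by
  unfold levee
  rw [if_neg, if_pos (abs_le.2 ⟨h1, h2⟩)]
  rw [not_le, abs_lt]; constructor <;> linarith

lemma levL (s x₁ x₂ : ℝ) (h1 : -2 < x₂ - s * x₁) (h2 : x₂ - s * x₁ < -1) :
    levee s x₁ x₂ = 2 + x₂ - s * x₁ := by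
  unfold levee
  rw [if_neg, if_neg, if_pos h2]
  · rw [not_le, abs_of_nonpos (by linarith)]; linarith
  · rw [not_le, abs_lt]; constructor <;> linarith

lemma levR (s x₁ x₂ : ℝ) (h1 : 1 < x₂ - s * x₁) (h2 : x₂ - s * x₁ < 2) :
    levee s x₁ x₂ = 2 - x₂ + s * x₁ := by
  unfold levee
  rw [if_neg, if_neg, if_neg (by linarith)]
  · rw [not_le, abs_of_nonneg (by linarith)]; linarith
  · rw [not_le, abs_lt]; constructor <;> linarith

lemma smono (ℓ : ℕ) (s : ℕ → ℝ) (h : ∀ i, i + 1 < ℓ → s i < s (i + 1)) :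
    ∀ a b, b < ℓ → a ≤ b → s a ≤ s b := by
  intro a b hb hab
  induction b with
  | zero => exact le_of_eq (by rw [Nat.le_zero.mp hab])
  | succ n ih =>
    rcases Nat.lt_or_ge a (n + 1) with h' | h'
    · exact le_trans (ih (by omega) (by omega)) (h n hb).le
    · have : a = n + 1 := by omega
      subst this; exact le_rfl


/-- Every levee `f_{s i}` fits all labeled data points of the selection gadget. -/
theorem levee_fits_selGadget (ℓ : ℕ) (hℓ : 1 ≤ ℓ) (s : ℕ → ℝ)
    (hmono : ∀ i, i + 1 < ℓ → s i < s (i + 1))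
    (ε : ℝ) (hε : 0 < ε) (hε₁ : 3 * ε * |s 0| ≤ 1) (hε₂ : 3 * ε * |s (ℓ - 1)| ≤ 1)
    (i : ℕ) (hi : i < ℓ) :
    ∀ q ∈ selGadget ℓ s ε, levee (s i) q.1.1 q.1.2 = q.2 := by
  have hA : s 0 ≤ s i := smono ℓ s hmono 0 i hi (Nat.zero_le _)
  have hB : s i ≤ s (ℓ - 1) := smono ℓ s hmono i (ℓ - 1) (by omega) (by omega)
  have hab1 : |ε * s 0| ≤ 1/3 := by
    rw [abs_mul, abs_of_pos hε]; linarith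
  have hab2 : |ε * s (ℓ - 1)| ≤ 1/3 := by
    rw [abs_mul, abs_of_pos hε]; linarith
  rw [abs_le] at hab1 hab2
  have he1 : ε * s 0 ≤ ε * s i := by nlinarith
  have he2 : ε * s i ≤ ε * s (ℓ - 1) := by nlinarith
  rintro ⟨⟨x, y⟩, v⟩ hq
  simp only [selGadget, Set.mem_union, Set.mem_insert_iff, Set.mem_singleton_iff,
    Set.mem_setOf_eq, Prod.mk.injEq] at hq
  obtain (((h|h|h|h|h|h|h|h|h|h|h|h|h)|(h|h|h|h|h|h|h|h|h))|(h|h|h|h|h|h|h|h|h))|⟨j,hj,h|h⟩ := hq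
  all_goals first
  | (obtain ⟨⟨rfl, rfl⟩, rfl⟩ := h; skip)
  | skip
  -- x₁ = 0 points
  · exact lev0 _ _ _ (by norm_num)
  · exact lev0 _ _ _ (by norm_num)
  · exact lev0 _ _ _ (by norm_num)
  · rw [levL _ _ _ (by norm_num) (by norm_num)]; norm_num
  · rw [levL _ _ _ (by norm_num) (by norm_num)]; norm_num
  · exact lev1 _ _ _ (by norm_num) (by norm_num)
  · exact lev1 _ _ _ (by norm_num) (by norm_num)
  · exact lev1 _ _ _ (by norm_num) (by norm_num)
  · rw [levR _ _ _ (by norm_num) (by norm_num)]; norm_num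
  · rw [levR _ _ _ (by norm_num) (by norm_num)]; norm_num
  · exact lev0 _ _ _ (by norm_num)
  · exact lev0 _ _ _ (by norm_num)
  · exact lev0 _ _ _ (by norm_num)
  -- x₁ = -ε points
  · exact lev0 _ _ _ (Or.inl (by ring_nf; ring_nf at he2 ⊢; linarith))
  · exact lev0 _ _ _ (Or.inl (by ring_nf; ring_nf at he2 ⊢; linarith))
  · exact lev0 _ _ _ (Or.inl (by ring_nf; ring_nf at he2 ⊢; linarith))
  · exact lev1 _ _ _ (by ring_nf; ring_nf at he1 hab1 hab2 he2; linarith)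
      (by ring_nf; ring_nf at he1 hab1 hab2 he2; linarith)
  · exact lev1 _ _ _ (by ring_nf; ring_nf at he1 hab1 hab2 he2 ⊢; linarith)
      (by ring_nf; ring_nf at he1 hab1 hab2 he2 ⊢; linarith)
  · exact lev1 _ _ _ (by ring_nf; ring_nf at he1 hab1 hab2 he2 ⊢; linarith)
      (by ring_nf; ring_nf at he1 hab1 hab2 he2 ⊢; linarith)
  · exact lev0 _ _ _ (Or.inr (by ring_nf; ring_nf at he1; linarith))
  · exact lev0 _ _ _ (Or.inr (by ring_nf; ring_nf at he1; linarith))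
  · exact lev0 _ _ _ (Or.inr (by ring_nf; ring_nf at he1; linarith))
  -- x₁ = ε points
  · exact lev0 _ _ _ (Or.inl (by ring_nf; ring_nf at he1; linarith))
  · exact lev0 _ _ _ (Or.inl (by ring_nf; ring_nf at he1; linarith))
  · exact lev0 _ _ _ (Or.inl (by ring_nf; ring_nf at he1; linarith))
  · exact lev1 _ _ _ (by ring_nf; ring_nf at he1 hab1 hab2 he2 ⊢; linarith)
      (by ring_nf; ring_nf at he1 hab1 hab2 he2 ⊢; linarith)
  · exact lev1 _ _ _ (by ring_nf; ring_nf at he1 hab1 hab2 he2 ⊢; linarith)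
      (by ring_nf; ring_nf at he1 hab1 hab2 he2 ⊢; linarith)
  · exact lev1 _ _ _ (by ring_nf; ring_nf at he1 hab1 hab2 he2; linarith)
      (by ring_nf; ring_nf at he1 hab1 hab2 he2; linarith)
  · exact lev0 _ _ _ (Or.inr (by ring_nf; ring_nf at he2 ⊢; linarith))
  · exact lev0 _ _ _ (Or.inr (by ring_nf; ring_nf at he2 ⊢; linarith))
  · exact lev0 _ _ _ (Or.inr (by ring_nf; ring_nf at he2 ⊢; linarith))
  -- family points
  · show levee (s i) (-4 / (s (j + 1) - s j)) (-2 * (s j + s (j + 1)) / (s (j + 1) - s j)) = 0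
    have hd : (0:ℝ) < s (j + 1) - s j := sub_pos.2 (hmono j hj)
    apply lev0
    have ht : -2 * (s j + s (j + 1)) / (s (j + 1) - s j) -
        s i * (-4 / (s (j + 1) - s j)) =
        (4 * s i - 2 * (s j + s (j + 1))) / (s (j + 1) - s j) := by
      field_simp; ring
    rw [ht]
    rcases Nat.lt_or_ge i (j + 1) with h' | h'
    · left
      rw [div_le_iff₀ hd]
      have : s i ≤ s j := smono ℓ s hmono i j (by omega) (by omega)
      linarith
    · right
      rw [le_div_iff₀ hd]
      have : s (j + 1) ≤ s i := smono ℓ s hmono (j + 1) i (by omega) h'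
      linarith
  · show levee (s i) (4 / (s (j + 1) - s j)) (2 * (s j + s (j + 1)) / (s (j + 1) - s j)) = 0
    have hd : (0:ℝ) < s (j + 1) - s j := sub_pos.2 (hmono j hj)
    apply lev0
    have ht : 2 * (s j + s (j + 1)) / (s (j + 1) - s j) -
        s i * (4 / (s (j + 1) - s j)) =
        (2 * (s j + s (j + 1)) - 4 * s i) / (s (j + 1) - s j) := by
      field_simp
    rw [ht]
    rcases Nat.lt_or_ge i (j + 1) with h' | h'
    · right
      rw [le_div_iff₀ hd]
      have : s i ≤ s j := smono ℓ s hmono i j (by omega) (by omega)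
      linarith
    · left
      rw [div_le_iff₀ hd]
      have : s (j + 1) ≤ s i := smono ℓ s hmono (j + 1) i (by omega) h'
      linarith
end

section
/- Let a₁ < a₂ < … < a₉ be real numbers and let g : ℝ → ℝ be a continuous function that is piecewise linear with at most 4 breakpoints, such that g(a_i) = 0 for i ∈ {1,2,3,7,8,9} and g(a_i) = 1 for i ∈ {4,5,6}. Then g(x) = 0 for all x ≤ a₃ and for all x ≥ a₇, and g(x) = 1 for all x with a₄ ≤ x ≤ a₆. -/
namespace NinePointsAux

/-- The five closed pieces determined by breakpoints `t1 ≤ t2 ≤ t3 ≤ t4`. -/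
def P (t1 t2 t3 t4 : ℝ) : ℕ → Set ℝ
  | 0 => Set.Iic t1
  | 1 => Set.Icc t1 t2
  | 2 => Set.Icc t2 t3
  | 3 => Set.Icc t3 t4
  | _ => Set.Ici t4

/-- Index of the piece containing `x`. -/
noncomputable def idx (t1 t2 t3 t4 x : ℝ) : ℕ :=
  (if t1 < x then 1 else 0) + (if t2 < x then 1 else 0)
    + (if t3 < x then 1 else 0) + (if t4 < x then 1 else 0)

lemma idx_le (t1 t2 t3 t4 x : ℝ) : idx t1 t2 t3 t4 x ≤ 4 := by
  unfold idx; split_ifs <;> norm_num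

lemma idx_spec {t1 t2 t3 t4 : ℝ} (h12 : t1 ≤ t2) (h23 : t2 ≤ t3) (h34 : t3 ≤ t4) (x : ℝ) :
    (idx t1 t2 t3 t4 x = 0 ∧ x ≤ t1) ∨ (idx t1 t2 t3 t4 x = 1 ∧ t1 < x ∧ x ≤ t2) ∨
    (idx t1 t2 t3 t4 x = 2 ∧ t2 < x ∧ x ≤ t3) ∨ (idx t1 t2 t3 t4 x = 3 ∧ t3 < x ∧ x ≤ t4) ∨
    (idx t1 t2 t3 t4 x = 4 ∧ t4 < x) := by
  unfold idx
  rcases le_or_gt x t1 with h | h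
  · left
    rw [if_neg (by linarith), if_neg (by linarith), if_neg (by linarith), if_neg (by linarith)]
    exact ⟨rfl, h⟩
  rcases le_or_gt x t2 with h2 | h2
  · right; left
    rw [if_pos h, if_neg (by linarith), if_neg (by linarith), if_neg (by linarith)]
    exact ⟨rfl, h, h2⟩
  rcases le_or_gt x t3 with h3 | h3
  · right; right; left
    rw [if_pos h, if_pos h2, if_neg (by linarith), if_neg (by linarith)]
    exact ⟨rfl, h2, h3⟩
  rcases le_or_gt x t4 with h4 | h4
  · right; right; right; left
    rw [if_pos h, if_pos h2, if_pos h3, if_neg (by linarith)]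
    exact ⟨rfl, h3, h4⟩
  · right; right; right; right
    rw [if_pos h, if_pos h2, if_pos h3, if_pos h4]
    exact ⟨rfl, h4⟩

lemma idx_mono {t1 t2 t3 t4 x y : ℝ} (hxy : x ≤ y) :
    idx t1 t2 t3 t4 x ≤ idx t1 t2 t3 t4 y := by
  have key : ∀ t : ℝ, (if t < x then (1:ℕ) else 0) ≤ (if t < y then 1 else 0) := by
    intro t
    split_ifs with h h'
    · exact le_refl _
    · exact absurd (h.trans_le hxy) h'
    · norm_num
    · exact le_refl _
  exact add_le_add (add_le_add (add_le_add (key t1) (key t2)) (key t3)) (key t4)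

lemma mem_P_idx {t1 t2 t3 t4 : ℝ} (h12 : t1 ≤ t2) (h23 : t2 ≤ t3) (h34 : t3 ≤ t4) (x : ℝ) :
    x ∈ P t1 t2 t3 t4 (idx t1 t2 t3 t4 x) := by
  rcases idx_spec h12 h23 h34 x with ⟨h, hx⟩ | ⟨h, hx, hx'⟩ | ⟨h, hx, hx'⟩ | ⟨h, hx, hx'⟩ | ⟨h, hx⟩ <;>
    rw [h]
  exacts [hx, ⟨hx.le, hx'⟩, ⟨hx.le, hx'⟩, ⟨hx.le, hx'⟩, hx.le]

lemma P_convex {t1 t2 t3 t4 : ℝ} {k : ℕ} (hk : k ≤ 4) {u w v : ℝ}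
    (hu : u ∈ P t1 t2 t3 t4 k) (hw : w ∈ P t1 t2 t3 t4 k) (h1 : u ≤ v) (h2 : v ≤ w) :
    v ∈ P t1 t2 t3 t4 k := by
  interval_cases k
  · exact le_trans h2 hw
  · exact ⟨le_trans hu.1 h1, le_trans h2 hw.2⟩
  · exact ⟨le_trans hu.1 h1, le_trans h2 hw.2⟩
  · exact ⟨le_trans hu.1 h1, le_trans h2 hw.2⟩
  · exact le_trans hu h1

end NinePointsAux

open NinePointsAux


/-- `g : ℝ → ℝ` is piecewise linear with at most 4 breakpoints: there are
`t₁ ≤ t₂ ≤ t₃ ≤ t₄` such that `g` restricted to each of the five induced closed intervals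
coincides with an affine map. -/
def PiecewiseLinear4 (g : ℝ → ℝ) : Prop :=
  ∃ t₁ t₂ t₃ t₄ : ℝ, t₁ ≤ t₂ ∧ t₂ ≤ t₃ ∧ t₃ ≤ t₄ ∧
    (∃ a b : ℝ, ∀ x ∈ Set.Iic t₁, g x = a * x + b) ∧
    (∃ a b : ℝ, ∀ x ∈ Set.Icc t₁ t₂, g x = a * x + b) ∧
    (∃ a b : ℝ, ∀ x ∈ Set.Icc t₂ t₃, g x = a * x + b) ∧
    (∃ a b : ℝ, ∀ x ∈ Set.Icc t₃ t₄, g x = a * x + b) ∧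
    (∃ a b : ℝ, ∀ x ∈ Set.Ici t₄, g x = a * x + b)

set_option maxHeartbeats 2000000 in
/-- Nine labeled points with label pattern `0,0,0,1,1,1,0,0,0` force a continuous piecewise linear
function with at most 4 breakpoints to be `0` before the third point and after the seventh point,
and to be `1` between the fourth and the sixth point. -/
theorem nine_points_force_levee_shape (a : Fin 9 → ℝ) (ha : StrictMono a)
    (g : ℝ → ℝ) (hg : Continuous g) (hpl : PiecewiseLinear4 g)
    (h₁ : g (a 0) = 0) (h₂ : g (a 1) = 0) (h₃ : g (a 2) = 0)
    (h₄ : g (a 3) = 1) (h₅ : g (a 4) = 1) (h₆ : g (a 5) = 1)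
    (h₇ : g (a 6) = 0) (h₈ : g (a 7) = 0) (h₉ : g (a 8) = 0) :
    (∀ x : ℝ, x ≤ a 2 → g x = 0) ∧ (∀ x : ℝ, a 6 ≤ x → g x = 0) ∧
    (∀ x : ℝ, a 3 ≤ x → x ≤ a 5 → g x = 1) := by
  obtain ⟨t1, t2, t3, t4, h12, h23, h34, ⟨c0, d0, H0⟩, ⟨c1, d1, H1⟩, ⟨c2, d2, H2⟩,
    ⟨c3, d3, H3⟩, ⟨c4, d4, H4⟩⟩ := hpl
  have o01 : a 0 < a 1 := ha (by decide)
  have o12 : a 1 < a 2 := ha (by decide)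
  have o23 : a 2 < a 3 := ha (by decide)
  have o34 : a 3 < a 4 := ha (by decide)
  have o45 : a 4 < a 5 := ha (by decide)
  have o56 : a 5 < a 6 := ha (by decide)
  have o67 : a 6 < a 7 := ha (by decide)
  have o78 : a 7 < a 8 := ha (by decide)
  have HP : ∀ k : ℕ, k ≤ 4 → ∃ c d : ℝ, ∀ x ∈ P t1 t2 t3 t4 k, g x = c * x + d := by
    intro k hk
    interval_cases k
    exacts [⟨c0, d0, H0⟩, ⟨c1, d1, H1⟩, ⟨c2, d2, H2⟩, ⟨c3, d3, H3⟩, ⟨c4, d4, H4⟩]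
  have hconst : ∀ u v : ℝ, u < v → idx t1 t2 t3 t4 u = idx t1 t2 t3 t4 v → g u = g v →
      ∀ x ∈ P t1 t2 t3 t4 (idx t1 t2 t3 t4 u), g x = g u := by
    intro u v huv he hguv x hx
    obtain ⟨c, d, hcd⟩ := HP _ (idx_le t1 t2 t3 t4 u)
    have hu := hcd u (mem_P_idx h12 h23 h34 u)
    have hv := hcd v (by rw [he]; exact mem_P_idx h12 h23 h34 v)
    have hc : c * (v - u) = 0 := by linear_combination hu - hv - hguv
    rcases mul_eq_zero.mp hc with hc0 | hvu
    · rw [hcd x hx, hu, hc0]; ring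
    · exact absurd (sub_eq_zero.mp hvu).symm (ne_of_lt huv)
  have htri : ∀ u v w : ℝ, u ≤ v → v ≤ w → idx t1 t2 t3 t4 u = idx t1 t2 t3 t4 w →
      (g v - g u) * (w - u) = (g w - g u) * (v - u) := by
    intro u v w huv hvw he
    obtain ⟨c, d, hcd⟩ := HP _ (idx_le t1 t2 t3 t4 u)
    have hu := hcd u (mem_P_idx h12 h23 h34 u)
    have hw := hcd w (by rw [he]; exact mem_P_idx h12 h23 h34 w)
    have hv := hcd v (P_convex (idx_le t1 t2 t3 t4 u) (mem_P_idx h12 h23 h34 u)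
      (by rw [he]; exact mem_P_idx h12 h23 h34 w) huv hvw)
    rw [hu, hv, hw]; ring
  have m01 : idx t1 t2 t3 t4 (a 0) ≤ idx t1 t2 t3 t4 (a 1) := idx_mono o01.le
  have m12 : idx t1 t2 t3 t4 (a 1) ≤ idx t1 t2 t3 t4 (a 2) := idx_mono o12.le
  have m23 : idx t1 t2 t3 t4 (a 2) ≤ idx t1 t2 t3 t4 (a 3) := idx_mono o23.le
  have m34 : idx t1 t2 t3 t4 (a 3) ≤ idx t1 t2 t3 t4 (a 4) := idx_mono o34.le
  have m45 : idx t1 t2 t3 t4 (a 4) ≤ idx t1 t2 t3 t4 (a 5) := idx_mono o45.le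
  have m56 : idx t1 t2 t3 t4 (a 5) ≤ idx t1 t2 t3 t4 (a 6) := idx_mono o56.le
  have m67 : idx t1 t2 t3 t4 (a 6) ≤ idx t1 t2 t3 t4 (a 7) := idx_mono o67.le
  have m78 : idx t1 t2 t3 t4 (a 7) ≤ idx t1 t2 t3 t4 (a 8) := idx_mono o78.le
  have le0 := idx_le t1 t2 t3 t4 (a 0)
  have le8 := idx_le t1 t2 t3 t4 (a 8)
  have L13 : idx t1 t2 t3 t4 (a 1) ≠ idx t1 t2 t3 t4 (a 3) := by
    intro h
    have hh := htri (a 1) (a 2) (a 3) o12.le o23.le h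
    rw [h₂, h₃, h₄] at hh
    linarith [o12]
  have L24 : idx t1 t2 t3 t4 (a 2) ≠ idx t1 t2 t3 t4 (a 4) := by
    intro h
    have hh := htri (a 2) (a 3) (a 4) o23.le o34.le h
    rw [h₃, h₄, h₅] at hh
    linarith [o34]
  have L46 : idx t1 t2 t3 t4 (a 4) ≠ idx t1 t2 t3 t4 (a 6) := by
    intro h
    have hh := htri (a 4) (a 5) (a 6) o45.le o56.le h
    rw [h₅, h₆, h₇] at hh
    linarith [o45]
  have L57 : idx t1 t2 t3 t4 (a 5) ≠ idx t1 t2 t3 t4 (a 7) := by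
    intro h
    have hh := htri (a 5) (a 6) (a 7) o56.le o67.le h
    rw [h₆, h₇, h₈] at hh
    linarith [o67]
  -- skeleton piece A : a constant-0 piece containing a 1
  have hA : ∃ k : ℕ, k ≤ 4 ∧ a 1 ∈ P t1 t2 t3 t4 k ∧ ∀ x ∈ P t1 t2 t3 t4 k, g x = 0 := by
    by_cases e01 : idx t1 t2 t3 t4 (a 0) = idx t1 t2 t3 t4 (a 1)
    · refine ⟨idx t1 t2 t3 t4 (a 0), idx_le _ _ _ _ _, ?_, ?_⟩
      · rw [e01]; exact mem_P_idx h12 h23 h34 (a 1)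
      · intro x hx
        rw [hconst (a 0) (a 1) o01 e01 (by rw [h₁, h₂]) x hx, h₁]
    by_cases e12 : idx t1 t2 t3 t4 (a 1) = idx t1 t2 t3 t4 (a 2)
    · refine ⟨idx t1 t2 t3 t4 (a 1), idx_le _ _ _ _ _, mem_P_idx h12 h23 h34 (a 1), ?_⟩
      intro x hx
      rw [hconst (a 1) (a 2) o12 e12 (by rw [h₂, h₃]) x hx, h₂]
    exfalso
    have q4 : idx t1 t2 t3 t4 (a 4) = 3 := by omega
    have q5 : idx t1 t2 t3 t4 (a 4) = idx t1 t2 t3 t4 (a 5) := by omega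
    have q6 : idx t1 t2 t3 t4 (a 6) = 4 := by omega
    have q7 : idx t1 t2 t3 t4 (a 6) = idx t1 t2 t3 t4 (a 7) := by omega
    have c45 := hconst (a 4) (a 5) o45 q5 (by rw [h₅, h₆])
    have c67 := hconst (a 6) (a 7) o67 q7 (by rw [h₇, h₈])
    have mp1 : t4 ∈ P t1 t2 t3 t4 (idx t1 t2 t3 t4 (a 4)) := by
      rw [q4]; exact ⟨h34, le_refl t4⟩
    have mp2 : t4 ∈ P t1 t2 t3 t4 (idx t1 t2 t3 t4 (a 6)) := by
      rw [q6]; exact le_refl t4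
    have A1 := c45 t4 mp1
    have A2 := c67 t4 mp2
    rw [h₅] at A1; rw [h₇] at A2
    linarith
  -- skeleton piece C : a constant-0 piece containing a 7
  have hC : ∃ k : ℕ, k ≤ 4 ∧ a 7 ∈ P t1 t2 t3 t4 k ∧ ∀ x ∈ P t1 t2 t3 t4 k, g x = 0 := by
    by_cases e78 : idx t1 t2 t3 t4 (a 7) = idx t1 t2 t3 t4 (a 8)
    · refine ⟨idx t1 t2 t3 t4 (a 7), idx_le _ _ _ _ _, mem_P_idx h12 h23 h34 (a 7), ?_⟩
      intro x hx
      rw [hconst (a 7) (a 8) o78 e78 (by rw [h₈, h₉]) x hx, h₈]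
    by_cases e67 : idx t1 t2 t3 t4 (a 6) = idx t1 t2 t3 t4 (a 7)
    · refine ⟨idx t1 t2 t3 t4 (a 6), idx_le _ _ _ _ _, ?_, ?_⟩
      · rw [e67]; exact mem_P_idx h12 h23 h34 (a 7)
      · intro x hx
        rw [hconst (a 6) (a 7) o67 e67 (by rw [h₇, h₈]) x hx, h₇]
    exfalso
    have q0 : idx t1 t2 t3 t4 (a 0) = idx t1 t2 t3 t4 (a 1) := by omega
    have q0' : idx t1 t2 t3 t4 (a 0) = 0 := by omega
    have q3 : idx t1 t2 t3 t4 (a 3) = idx t1 t2 t3 t4 (a 4) := by omega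
    have q3' : idx t1 t2 t3 t4 (a 3) = 1 := by omega
    have c01 := hconst (a 0) (a 1) o01 q0 (by rw [h₁, h₂])
    have c34 := hconst (a 3) (a 4) o34 q3 (by rw [h₄, h₅])
    have mp1 : t1 ∈ P t1 t2 t3 t4 (idx t1 t2 t3 t4 (a 0)) := by
      rw [q0']; exact le_refl t1
    have mp2 : t1 ∈ P t1 t2 t3 t4 (idx t1 t2 t3 t4 (a 3)) := by
      rw [q3']; exact ⟨le_refl t1, h12⟩
    have A1 := c01 t1 mp1
    have A2 := c34 t1 mp2
    rw [h₁] at A1; rw [h₄] at A2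
    linarith
  -- skeleton piece B : a constant-1 piece containing a 4
  have hB : ∃ k : ℕ, k ≤ 4 ∧ a 4 ∈ P t1 t2 t3 t4 k ∧ ∀ x ∈ P t1 t2 t3 t4 k, g x = 1 := by
    by_cases e34 : idx t1 t2 t3 t4 (a 3) = idx t1 t2 t3 t4 (a 4)
    · refine ⟨idx t1 t2 t3 t4 (a 3), idx_le _ _ _ _ _, ?_, ?_⟩
      · rw [e34]; exact mem_P_idx h12 h23 h34 (a 4)
      · intro x hx
        rw [hconst (a 3) (a 4) o34 e34 (by rw [h₄, h₅]) x hx, h₄]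
    by_cases e45 : idx t1 t2 t3 t4 (a 4) = idx t1 t2 t3 t4 (a 5)
    · refine ⟨idx t1 t2 t3 t4 (a 4), idx_le _ _ _ _ _, mem_P_idx h12 h23 h34 (a 4), ?_⟩
      intro x hx
      rw [hconst (a 4) (a 5) o45 e45 (by rw [h₅, h₆]) x hx, h₅]
    exfalso
    have q0 : idx t1 t2 t3 t4 (a 0) = idx t1 t2 t3 t4 (a 1) := by omega
    have q0' : idx t1 t2 t3 t4 (a 0) = 0 := by omega
    have q7 : idx t1 t2 t3 t4 (a 7) = idx t1 t2 t3 t4 (a 8) := by omega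
    have q7' : idx t1 t2 t3 t4 (a 7) = 4 := by omega
    have q3' : idx t1 t2 t3 t4 (a 3) = 1 := by omega
    have q4' : idx t1 t2 t3 t4 (a 4) = 2 := by omega
    have q5' : idx t1 t2 t3 t4 (a 5) = 3 := by omega
    have c01 := hconst (a 0) (a 1) o01 q0 (by rw [h₁, h₂])
    have c78 := hconst (a 7) (a 8) o78 q7 (by rw [h₈, h₉])
    have gt1 : g t1 = 0 := by
      have := c01 t1 (by rw [q0']; exact le_refl t1)
      rw [h₁] at this; exact this
    have gt4 : g t4 = 0 := by
      have := c78 t4 (by rw [q7']; exact le_refl t4)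
      rw [h₈] at this; exact this
    have b3 : t1 < a 3 ∧ a 3 ≤ t2 := by
      rcases idx_spec h12 h23 h34 (a 3) with ⟨h, hx⟩ | ⟨h, hx, hx'⟩ | ⟨h, hx, hx'⟩ |
        ⟨h, hx, hx'⟩ | ⟨h, hx⟩
      · omega
      · exact ⟨hx, hx'⟩
      · omega
      · omega
      · omega
    have b4 : t2 < a 4 ∧ a 4 ≤ t3 := by
      rcases idx_spec h12 h23 h34 (a 4) with ⟨h, hx⟩ | ⟨h, hx, hx'⟩ | ⟨h, hx, hx'⟩ |
        ⟨h, hx, hx'⟩ | ⟨h, hx⟩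
      · omega
      · omega
      · exact ⟨hx, hx'⟩
      · omega
      · omega
    have b5 : t3 < a 5 ∧ a 5 ≤ t4 := by
      rcases idx_spec h12 h23 h34 (a 5) with ⟨h, hx⟩ | ⟨h, hx, hx'⟩ | ⟨h, hx, hx'⟩ |
        ⟨h, hx, hx'⟩ | ⟨h, hx⟩
      · omega
      · omega
      · omega
      · exact ⟨hx, hx'⟩
      · omega
    have E1a := H1 t1 ⟨le_refl t1, h12⟩
    have E1b := H1 (a 3) ⟨b3.1.le, b3.2⟩
    have E1c := H1 t2 ⟨h12, le_refl t2⟩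
    have E2a := H2 t2 ⟨le_refl t2, h23⟩
    have E2b := H2 (a 4) ⟨b4.1.le, b4.2⟩
    have E2c := H2 t3 ⟨h23, le_refl t3⟩
    have E3a := H3 t3 ⟨le_refl t3, h34⟩
    have E3b := H3 (a 5) ⟨b5.1.le, b5.2⟩
    have E3c := H3 t4 ⟨h34, le_refl t4⟩
    rw [gt1] at E1a
    rw [h₄] at E1b
    rw [h₅] at E2b
    rw [h₆] at E3b
    rw [gt4] at E3c
    have hc1 : c1 * (a 3 - t1) = 1 := by linear_combination E1a - E1b
    have hc1pos : 0 < c1 := by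
      rcases mul_pos_iff.mp (by rw [hc1]; norm_num : (0:ℝ) < c1 * (a 3 - t1)) with h | h
      · exact h.1
      · exfalso; linarith [h.2, b3.1]
    have q2 : 1 ≤ g t2 := by
      linarith [E1c, E1b, mul_nonneg hc1pos.le (sub_nonneg.2 b3.2)]
    have hc3 : c3 * (t4 - a 5) = -1 := by linear_combination E3b - E3c
    have h5t4 : a 5 < t4 := by
      rcases eq_or_lt_of_le b5.2 with hq | hq
      · exfalso; rw [hq] at hc3; simp at hc3
      · exact hq
    have hc3neg : c3 < 0 := by
      rcases mul_neg_iff.mp (by rw [hc3]; norm_num : c3 * (t4 - a 5) < 0) with h | h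
      · exfalso; linarith [h.2, h5t4]
      · exact h.1
    have q3 : 1 < g t3 := by
      linarith [E3a, E3b, mul_pos (neg_pos.2 hc3neg) (sub_pos.2 b5.1)]
    have r1 : 1 - g t2 = c2 * (a 4 - t2) := by linear_combination E2b - E2a
    have r2 : g t3 - 1 = c2 * (t3 - a 4) := by linear_combination E2c - E2b
    have hc2a : c2 ≤ 0 := by
      by_contra hcc
      push_neg at hcc
      linarith [r1, q2, mul_pos hcc (sub_pos.2 b4.1)]
    have hc2b : 0 < c2 := by
      by_contra hcc
      push_neg at hcc
      linarith [r2, q3, mul_nonneg (neg_nonneg.2 hcc) (sub_nonneg.2 b4.2)]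
    linarith
  -- pin the three skeleton pieces to indices 0, 2, 4
  obtain ⟨kA, hkA, mA, cA⟩ := hA
  obtain ⟨kB, hkB, mB, cB⟩ := hB
  obtain ⟨kC, hkC, mC, cC⟩ := hC
  have horder : ∀ j k : ℕ, j < k → k ≤ 4 → ∀ u ∈ P t1 t2 t3 t4 j, ∀ v ∈ P t1 t2 t3 t4 k,
      u ≤ v := by
    intro j k hjk hk4 u hu v hv
    have hj : j ≤ 3 := by omega
    interval_cases j <;> interval_cases k <;>
      simp only [P, Set.mem_Iic, Set.mem_Icc, Set.mem_Ici] at hu hv <;> linarith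
  have hshare : ∀ k : ℕ, k ≤ 3 → ∃ w, w ∈ P t1 t2 t3 t4 k ∧ w ∈ P t1 t2 t3 t4 (k+1) := by
    intro k hk; interval_cases k
    exacts [⟨t1, le_refl t1, ⟨le_refl t1, h12⟩⟩, ⟨t2, ⟨h12, le_refl t2⟩, ⟨le_refl t2, h23⟩⟩,
      ⟨t3, ⟨h23, le_refl t3⟩, ⟨le_refl t3, h34⟩⟩, ⟨t4, ⟨h34, le_refl t4⟩, le_refl t4⟩]
  have hAB : kA + 2 ≤ kB := by
    have hlt : kA < kB := by
      rcases lt_or_ge kA kB with h | h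
      · exact h
      exfalso
      rcases eq_or_lt_of_le h with hq | hq
      · have := cA (a 4) (by rw [← hq]; exact mB)
        rw [h₅] at this; norm_num at this
      · have := horder kB kA hq hkA (a 4) mB (a 1) mA
        linarith
    have hne : kB ≠ kA + 1 := by
      intro hh
      obtain ⟨w, hw1, hw2⟩ := hshare kA (by omega)
      have A1 := cA w hw1
      have A2 := cB w (by rw [hh]; exact hw2)
      linarith
    omega
  have hBC : kB + 2 ≤ kC := by
    have hlt : kB < kC := by
      rcases lt_or_ge kB kC with h | h
      · exact h
      exfalso
      rcases eq_or_lt_of_le h with hq | hq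
      · have := cB (a 7) (by rw [← hq]; exact mC)
        rw [h₈] at this; norm_num at this
      · have := horder kC kB hq hkB (a 7) mC (a 4) mB
        linarith
    have hne : kC ≠ kB + 1 := by
      intro hh
      obtain ⟨w, hw1, hw2⟩ := hshare kB (by omega)
      have A1 := cB w hw1
      have A2 := cC w (by rw [hh]; exact hw2)
      linarith
    omega
  have hkA0 : kA = 0 := by omega
  have hkB2 : kB = 2 := by omega
  have hkC4 : kC = 4 := by omega
  subst hkA0; subst hkB2; subst hkC4
  have ha1t1 : a 1 ≤ t1 := mA
  have hB1 : t2 ≤ a 4 := mB.1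
  have hB2 : a 4 ≤ t3 := mB.2
  have ht4a7 : t4 ≤ a 7 := mC
  have gt1 : g t1 = 0 := cA t1 (le_refl t1)
  have gt2 : g t2 = 1 := cB t2 ⟨le_refl t2, h23⟩
  have gt3 : g t3 = 1 := cB t3 ⟨h23, le_refl t3⟩
  have gt4 : g t4 = 0 := cC t4 (le_refl t4)
  -- a 2 ≤ t1
  have ha2 : a 2 ≤ t1 := by
    by_contra hcon
    push_neg at hcon
    rcases le_or_gt (a 2) t2 with hh | hh
    · have E1 := H1 t1 ⟨le_refl t1, h12⟩
      have E2 := H1 (a 2) ⟨hcon.le, hh⟩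
      have E3 := H1 t2 ⟨h12, le_refl t2⟩
      rw [gt1] at E1; rw [h₃] at E2; rw [gt2] at E3
      have z1 : c1 * (a 2 - t1) = 0 := by linear_combination E1 - E2
      have z2 : c1 * (t2 - t1) = 1 := by linear_combination E1 - E3
      rcases mul_eq_zero.mp z1 with h0 | h0
      · rw [h0, zero_mul] at z2; norm_num at z2
      · have := sub_eq_zero.mp h0; linarith
    · have hmem : a 2 ∈ P t1 t2 t3 t4 2 := ⟨hh.le, by linarith⟩
      have := cB (a 2) hmem
      rw [h₃] at this; norm_num at this
  -- t2 ≤ a 3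
  have ha3 : t2 ≤ a 3 := by
    by_contra hcon
    push_neg at hcon
    rcases le_or_gt (a 3) t1 with hh | hh
    · have := cA (a 3) hh
      rw [h₄] at this; norm_num at this
    · have E1 := H1 t1 ⟨le_refl t1, h12⟩
      have E2 := H1 (a 3) ⟨hh.le, hcon.le⟩
      have E3 := H1 t2 ⟨h12, le_refl t2⟩
      rw [gt1] at E1; rw [h₄] at E2; rw [gt2] at E3
      have z1 : c1 * (t2 - a 3) = 0 := by linear_combination E2 - E3
      have z2 : c1 * (a 3 - t1) = 1 := by linear_combination E1 - E2
      rcases mul_eq_zero.mp z1 with h0 | h0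
      · rw [h0, zero_mul] at z2; norm_num at z2
      · have := sub_eq_zero.mp h0; linarith
  -- a 5 ≤ t3
  have ha5 : a 5 ≤ t3 := by
    by_contra hcon
    push_neg at hcon
    rcases le_or_gt t4 (a 5) with hh | hh
    · have := cC (a 5) hh
      rw [h₆] at this; norm_num at this
    · have E1 := H3 t3 ⟨le_refl t3, h34⟩
      have E2 := H3 (a 5) ⟨hcon.le, hh.le⟩
      have E3 := H3 t4 ⟨h34, le_refl t4⟩
      rw [gt3] at E1; rw [h₆] at E2; rw [gt4] at E3
      have z1 : c3 * (a 5 - t3) = 0 := by linear_combination E1 - E2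
      have z2 : c3 * (t4 - a 5) = -1 := by linear_combination E2 - E3
      rcases mul_eq_zero.mp z1 with h0 | h0
      · rw [h0, zero_mul] at z2; norm_num at z2
      · have := sub_eq_zero.mp h0; linarith
  -- t4 ≤ a 6
  have ha6 : t4 ≤ a 6 := by
    by_contra hcon
    push_neg at hcon
    rcases le_or_gt (a 6) t3 with hh | hh
    · have hmem : a 6 ∈ P t1 t2 t3 t4 2 := ⟨by linarith, hh⟩
      have := cB (a 6) hmem
      rw [h₇] at this; norm_num at this
    · have E1 := H3 t3 ⟨le_refl t3, h34⟩
      have E2 := H3 (a 6) ⟨hh.le, hcon.le⟩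
      have E3 := H3 t4 ⟨h34, le_refl t4⟩
      rw [gt3] at E1; rw [h₇] at E2; rw [gt4] at E3
      have z1 : c3 * (t4 - a 6) = 0 := by linear_combination E2 - E3
      have z2 : c3 * (a 6 - t3) = -1 := by linear_combination E1 - E2
      rcases mul_eq_zero.mp z1 with h0 | h0
      · rw [h0, zero_mul] at z2; norm_num at z2
      · have := sub_eq_zero.mp h0; linarith
  refine ⟨fun x hx => cA x (le_trans hx ha2), fun x hx => cC x (le_trans ha6 hx),
    fun x hx1 hx2 => cB x ⟨le_trans ha3 hx1, le_trans hx2 ha5⟩⟩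
end

section
/- Consider m selection gadgets with offsets z₁ < … < z_m, where the j-th gadget has ℓ_j ≥ 2 slopes s₁^{(j)} < … < s_{ℓ_j}^{(j)}, all gadgets use the same parameter ε > 0 satisfying 3ε|s₁^{(j)}| ≤ 1 and 3ε|s_{ℓ_j}^{(j)}| ≤ 1 for every j. Let δ = min over j and i of (s_{i+1}^{(j)} − s_i^{(j)}) and S = max over j and i of |s_i^{(j)}|. If z_{j+1} − z_j ≥ 8S/δ + 6 for all j ∈ {1,…,m−1}, then for all j ≠ j' in {1,…,m}, every i ∈ {1,…,ℓ_j}, and every labeled data point ((x̄₁,x̄₂), y) of the gadget with offset z_{j'}, the shifted levee of gadget j vanishes there: f_{s_i^{(j)}}(x̄₁, x̄₂ − z_j) = 0. -/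
lemma levee_eq_zero {s x₁ x₂ : ℝ} (h : 2 ≤ |x₂ - s * x₁|) : levee s x₁ x₂ = 0 := by
  simp [levee, h]

lemma key_bound {S δ x₁ x₂ sl D : ℝ} (hb : |x₂| + |sl| * |x₁| ≤ 8 * S / δ + 4)
    (hD : 8 * S / δ + 6 ≤ |D|) : 2 ≤ |x₂ + D - sl * x₁| := by
  have h1 : |x₂ - sl * x₁| ≤ |x₂| + |sl * x₁| := abs_sub _ _
  have h2 : |D| ≤ |x₂ + D - sl * x₁| + |x₂ - sl * x₁| := by
    calc |D| = |(x₂ + D - sl * x₁) - (x₂ - sl * x₁)| := by congr 1; ring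
    _ ≤ _ := abs_sub _ _
  rw [abs_mul] at h1
  linarith

set_option maxHeartbeats 2000000 in
lemma point_bound (ℓ' : ℕ) (s' : ℕ → ℝ) (ε σ S δ : ℝ) (hε : 0 < ε)
    (hσS : σ ≤ S) (hσ0 : 0 ≤ σ) (hεσ : ε * σ ≤ 1/3)
    (h0 : ε * |s' 0| ≤ 1/3) (h1 : ε * |s' (ℓ' - 1)| ≤ 1/3)
    (hSb : ∀ k, k < ℓ' → |s' k| ≤ S) (hℓ2 : 2 ≤ ℓ')
    (hgap : ∀ i, i + 1 < ℓ' → δ ≤ s' (i + 1) - s' i)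
    (hδ : 0 < δ) (hS4 : 4 ≤ 8 * S / δ) :
    ∀ q ∈ selGadget ℓ' s' ε, |q.1.2| + σ * |q.1.1| ≤ 8 * S / δ + 4 := by
  have hA0 : ε * s' 0 ≤ 1/3 :=
    le_trans (mul_le_mul_of_nonneg_left (le_abs_self _) hε.le) h0
  have hB0 : -(1/3) ≤ ε * s' 0 := by
    have := mul_le_mul_of_nonneg_left (neg_abs_le (s' 0)) hε.le
    rw [mul_neg] at this; linarith
  have hA1 : ε * s' (ℓ' - 1) ≤ 1/3 :=
    le_trans (mul_le_mul_of_nonneg_left (le_abs_self _) hε.le) h1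
  have hB1 : -(1/3) ≤ ε * s' (ℓ' - 1) := by
    have := mul_le_mul_of_nonneg_left (neg_abs_le (s' (ℓ' - 1))) hε.le
    rw [mul_neg] at this; linarith
  have hσε : σ * ε ≤ 1/3 := by rw [mul_comm]; exact hεσ
  have hσε0 : 0 ≤ σ * ε := mul_nonneg hσ0 hε.le
  intro q hq
  simp only [selGadget, Set.mem_union, Set.mem_insert_iff, Set.mem_singleton_iff,
    Set.mem_setOf_eq] at hq
  rcases hq with ((hq | hq) | hq) | ⟨i, hi, hc⟩
  · rcases hq with h|h|h|h|h|h|h|h|h|h|h|h|h <;> subst h <;>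
      (simp only [abs_zero, mul_zero, add_zero];
       first
       | linarith
       | (rw [abs_le]; constructor <;> linarith))
  · rcases hq with h|h|h|h|h|h|h|h|h <;> subst h <;> simp only [abs_neg] <;>
      (rw [abs_of_pos hε, ← le_sub_iff_add_le, abs_le]; constructor <;> linarith)
  · rcases hq with h|h|h|h|h|h|h|h|h <;> subst h <;>
      (rw [abs_of_pos hε, ← le_sub_iff_add_le, abs_le]; constructor <;> linarith)
  · have hΔl : δ ≤ s' (i + 1) - s' i := hgap i hi
    have hΔ : 0 < s' (i + 1) - s' i := lt_of_lt_of_le hδ hΔl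
    have hia : |s' i| ≤ S := hSb i (by omega)
    have hib : |s' (i + 1)| ≤ S := hSb (i + 1) hi
    have hnum : |s' i + s' (i + 1)| ≤ 2 * S := (abs_add_le _ _).trans (by linarith)
    have hS0 : 0 ≤ S := le_trans (abs_nonneg _) hia
    have a2 : |(-2 : ℝ)| = 2 := by norm_num
    have a4 : |(-4 : ℝ)| = 4 := by norm_num
    have b2 : |(2 : ℝ)| = 2 := by norm_num
    have b4 : |(4 : ℝ)| = 4 := by norm_num
    have e1 : 2 * |s' i + s' (i + 1)| / (s' (i + 1) - s' i) ≤ 4 * S / δ :=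
      div_le_div₀ (by linarith) (by linarith) hδ hΔl
    have e2 : σ * 4 / (s' (i + 1) - s' i) ≤ 4 * S / δ :=
      div_le_div₀ (by linarith) (by linarith) hδ hΔl
    have e3 : σ * (4 / (s' (i + 1) - s' i)) = σ * 4 / (s' (i + 1) - s' i) := by ring
    have e4 : 4 * S / δ + 4 * S / δ = 8 * S / δ := by ring
    rcases hc with h | h <;> subst h <;>
      simp only [abs_div, abs_mul, abs_of_pos hΔ, a2, a4, b2, b4] <;>
      rw [e3] <;> linarith

/-- For sufficiently separated selection gadgets, each levee of one gadget vanishes at every data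
point of every other gadget. -/
theorem levee_vanishes_on_other_gadgets (m : ℕ) (hm : 1 ≤ m) (z : ℕ → ℝ)
    (hzmono : ∀ j, j + 1 < m → z j < z (j + 1))
    (ℓ : ℕ → ℕ) (hℓ : ∀ j, j < m → 2 ≤ ℓ j)
    (s : ℕ → ℕ → ℝ) (hmono : ∀ j, j < m → ∀ i, i + 1 < ℓ j → s j i < s j (i + 1))
    (ε : ℝ) (hε : 0 < ε)
    (hε₁ : ∀ j, j < m → 3 * ε * |s j 0| ≤ 1) (hε₂ : ∀ j, j < m → 3 * ε * |s j (ℓ j - 1)| ≤ 1)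
    (δ S : ℝ)
    (hδ : IsLeast {x : ℝ | ∃ j, j < m ∧ ∃ i, i + 1 < ℓ j ∧ x = s j (i + 1) - s j i} δ)
    (hS : IsGreatest {x : ℝ | ∃ j, j < m ∧ ∃ i, i < ℓ j ∧ x = |s j i|} S)
    (hz : ∀ j, j + 1 < m → 8 * S / δ + 6 ≤ z (j + 1) - z j) :
    ∀ j j', j < m → j' < m → j ≠ j' → ∀ i, i < ℓ j →
      ∀ q ∈ selGadgetOff (ℓ j') (s j') ε (z j'),
        levee (s j i) q.1.1 (q.1.2 - z j) = 0 := by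
  have hSupper : ∀ j, j < m → ∀ k, k < ℓ j → |s j k| ≤ S :=
    fun j hj k hk => hS.2 ⟨j, hj, k, hk, rfl⟩
  obtain ⟨j₀, hj₀, i₀, hi₀, hδeq⟩ := hδ.1
  have hδpos : 0 < δ := by rw [hδeq]; exact sub_pos.mpr (hmono j₀ hj₀ i₀ hi₀)
  have hS4 : 4 ≤ 8 * S / δ := by
    have ha := hSupper j₀ hj₀ i₀ (by omega)
    have hb := hSupper j₀ hj₀ (i₀ + 1) hi₀
    have h2S : δ ≤ 2 * S := by
      have h1 := le_abs_self (s j₀ (i₀ + 1))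
      have h2 := neg_abs_le (s j₀ i₀)
      rw [hδeq]; linarith
    rw [le_div_iff₀ hδpos]; linarith
  have hzsep : ∀ a b, a < b → b < m → z a + (8 * S / δ + 6) ≤ z b := by
    intro a b hab hbm
    induction b with
    | zero => omega
    | succ n ih =>
      rcases Nat.lt_or_ge a n with h | h
      · have h1 := ih h (by omega)
        have h2 := hzmono n hbm
        linarith
      · have : a = n := by omega
        subst this
        have := hz a hbm
        linarith
  have hεb : ∀ j, j < m → ∀ i, i < ℓ j → ε * |s j i| ≤ 1 / 3 := by
    intro j hj i hi
    have hℓj := hℓ j hj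
    have hmono' : ∀ a b : ℕ, a ≤ b → b < ℓ j → s j a ≤ s j b := by
      intro a b hab hb
      induction b with
      | zero =>
        have : a = 0 := by omega
        subst this; exact le_refl _
      | succ n ih =>
        rcases Nat.lt_or_ge a (n + 1) with hlt | hge
        · exact le_trans (ih (by omega) (by omega)) (le_of_lt (hmono j hj n hb))
        · have : a = n + 1 := by omega
          subst this; exact le_refl _
    have h1 : s j 0 ≤ s j i := hmono' 0 i (Nat.zero_le _) hi
    have h2 : s j i ≤ s j (ℓ j - 1) := hmono' i (ℓ j - 1) (by omega) (by omega)
    have hmax : |s j i| ≤ max |s j 0| |s j (ℓ j - 1)| := abs_le_max_abs_abs h1 h2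
    have hmul := mul_le_mul_of_nonneg_left hmax hε.le
    rcases max_cases |s j 0| |s j (ℓ j - 1)| with ⟨hm, _⟩ | ⟨hm, _⟩
    · rw [hm] at hmul
      have h3 := hε₁ j hj
      linarith
    · rw [hm] at hmul
      have h3 := hε₂ j hj
      linarith
  intro j j' hjm hj'm hne i hi q hq
  obtain ⟨p, hp, rfl⟩ := hq
  apply levee_eq_zero
  have hb := point_bound (ℓ j') (s j') ε |s j i| S δ hε (hSupper j hjm i hi) (abs_nonneg _)
    (hεb j hjm i hi) (hεb j' hj'm 0 (by have := hℓ j' hj'm; omega))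
    (hεb j' hj'm (ℓ j' - 1) (by have := hℓ j' hj'm; omega))
    (hSupper j' hj'm) (hℓ j' hj'm)
    (fun k hk => hδ.2 ⟨j', hj'm, k, hk, rfl⟩) hδpos hS4 p hp
  have hD : 8 * S / δ + 6 ≤ |z j' - z j| := by
    rcases hne.lt_or_gt with h | h
    · have := hzsep j j' h hj'm
      exact le_trans (by linarith) (le_abs_self _)
    · have := hzsep j' j h hjm
      rw [abs_sub_comm]
      exact le_trans (by linarith) (le_abs_self _)
  have h2 := key_bound hb hD
  show 2 ≤ |p.1.2 + z j' - z j - s j i * p.1.1|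
  have e : p.1.2 + z j' - z j - s j i * p.1.1 = p.1.2 + (z j' - z j) - s j i * p.1.1 := by
    ring
  rw [e]; exact h2
end

section
/- In the global construction for a formula with m clauses over n variables, suppose T ⊆ {1,…,n} is such that for every clause index j ∈ {1,…,m} there is exactly one r ∈ {1,2,3} with v(j,r) ∈ T, and denote this unique index by r_j. Then the function f(x₁,x₂) = Σ_{i∈T} f_{−1}(x₁, x₂ + iΔ) + Σ_{i∈{1,…,n}\T} f_{1}(x₁, x₂ + iΔ) + Σ_{j=1}^{m} f_{s_{r_j}^{(j)}}(x₁, x₂ − jΔ) fits every labeled data point of the constructed data set X_F, i.e., f(x₁,x₂) = y for every labeled point ((x₁,x₂),y) ∈ X_F. -/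
set_option maxHeartbeats 2000000


/-- The slope `s_r^{(j)} = (2j − 3 + r)·δ − 1` with `δ = 1/(2m)` of the global construction. -/
noncomputable def slopeG (m j r : ℕ) : ℝ :=
  (2 * (j : ℝ) - 3 + (r : ℝ)) * (1 / (2 * (m : ℝ))) - 1

/-- The offset distance `Δ = 16m + 6` of the global construction. -/
noncomputable def DeltaG (m : ℕ) : ℝ := 16 * (m : ℝ) + 6

/-- The point `p_{j,r}` of the global construction, where `i = v(j,r)`. -/
noncomputable def pPoint (m i j r : ℕ) : ℝ × ℝ :=
  (DeltaG m * ((i : ℝ) + (j : ℝ)) / (1 - slopeG m j r),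
   DeltaG m * ((i : ℝ) + (j : ℝ)) / (1 - slopeG m j r) - DeltaG m * (i : ℝ))

/-- The two slopes `-1 < 1` used by the variable gadgets. -/
noncomputable def varSlopes : ℕ → ℝ := fun t => if t = 0 then -1 else 1

/-- The data set `X_F` of the global construction: one selection gadget (with slopes
`s₁^{(j)} < s₂^{(j)} < s₃^{(j)}`, parameter `ε = 1/3` and offset `jΔ`) per clause, one selection
gadget (with slopes `-1 < 1`, parameter `ε = 1/3` and offset `-iΔ`) per variable, and the points
`p_{j,r}` with label `1`. -/
noncomputable def XF (m n : ℕ) (v : ℕ → ℕ → ℕ) : Set ((ℝ × ℝ) × ℝ) :=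
  (⋃ j ∈ Set.Icc 1 m, selGadgetOff 3 (fun i => slopeG m j (i + 1)) (1/3) ((j : ℝ) * DeltaG m)) ∪
  (⋃ i ∈ Set.Icc 1 n, selGadgetOff 2 varSlopes (1/3) (-((i : ℝ) * DeltaG m))) ∪
  {q | ∃ j, 1 ≤ j ∧ j ≤ m ∧ ∃ r, 1 ≤ r ∧ r ≤ 3 ∧ q = (pPoint m (v j r) j r, 1)}


lemma levee_eq_zero_le {s x₁ x₂ : ℝ} (h : x₂ - s * x₁ ≤ -2) : levee s x₁ x₂ = 0 := by
  rw [levee, if_pos (le_abs.mpr (Or.inr (by linarith)))]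

lemma levee_eq_zero_ge {s x₁ x₂ : ℝ} (h : 2 ≤ x₂ - s * x₁) : levee s x₁ x₂ = 0 := by
  rw [levee, if_pos (le_abs.mpr (Or.inl h))]

lemma levee_eq_one {s x₁ x₂ : ℝ} (h1 : -1 ≤ x₂ - s * x₁) (h2 : x₂ - s * x₁ ≤ 1) :
    levee s x₁ x₂ = 1 := by
  rw [levee, if_neg (by rw [not_le, abs_lt]; constructor <;> linarith),
    if_pos (abs_le.mpr ⟨h1, h2⟩)]

lemma levee_eq_mid_neg {s x₁ x₂ : ℝ} (h1 : -2 < x₂ - s * x₁) (h2 : x₂ - s * x₁ < -1) :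
    levee s x₁ x₂ = 2 + x₂ - s * x₁ := by
  rw [levee, if_neg (by rw [not_le, abs_lt]; constructor <;> linarith),
    if_neg (by rw [not_le, lt_abs]; exact Or.inr (by linarith)), if_pos h2]

lemma levee_eq_mid_pos {s x₁ x₂ : ℝ} (h1 : 1 < x₂ - s * x₁) (h2 : x₂ - s * x₁ < 2) :
    levee s x₁ x₂ = 2 - x₂ + s * x₁ := by
  rw [levee, if_neg (by rw [not_le, abs_lt]; constructor <;> linarith),
    if_neg (by rw [not_le, lt_abs]; exact Or.inl h1),
    if_neg (by linarith)]

lemma gadget_fit (ℓ k : ℕ) (s : ℕ → ℝ) (ε : ℝ) (hε : 0 < ε) (hk : k < ℓ)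
    (hmono : ∀ i j : ℕ, i < j → j < ℓ → s i < s j)
    (h2 : ε * (s (ℓ - 1) - s 0) ≤ 2) (h3 : ε * |s k| ≤ 1) :
    ∀ q ∈ selGadget ℓ s ε, levee (s k) q.1.1 q.1.2 = q.2 := by
  have hmono' : ∀ i j : ℕ, i ≤ j → j < ℓ → s i ≤ s j := by
    intro i j hij hj
    rcases hij.lt_or_eq with h | h
    · exact (hmono i j h hj).le
    · rw [h]
  have h0k : s 0 ≤ s k := hmono' 0 k (Nat.zero_le k) hk
  have hkl : s k ≤ s (ℓ - 1) := hmono' k (ℓ - 1) (by omega) (by omega)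
  have h3a : ε * s k ≤ 1 := le_trans (le_trans (le_abs_self _) (le_of_eq (by
    rw [abs_mul, abs_of_pos hε]))) h3
  have h3b : -1 ≤ ε * s k := by
    have : -(ε * |s k|) ≤ ε * s k := by
      rw [← mul_neg]
      exact mul_le_mul_of_nonneg_left (neg_abs_le _) hε.le
    linarith
  have hp1 : ε * s k ≤ ε * s (ℓ - 1) := mul_le_mul_of_nonneg_left hkl hε.le
  have hp0 : ε * s 0 ≤ ε * s k := mul_le_mul_of_nonneg_left h0k hε.le
  intro q hq
  simp only [selGadget, Set.mem_union, Set.mem_insert_iff, Set.mem_singleton_iff,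
    Set.mem_setOf_eq] at hq
  rcases hq with (((rfl|rfl|rfl|rfl|rfl|rfl|rfl|rfl|rfl|rfl|rfl|rfl|rfl)|
    (rfl|rfl|rfl|rfl|rfl|rfl|rfl|rfl|rfl))|(rfl|rfl|rfl|rfl|rfl|rfl|rfl|rfl|rfl))|⟨i,hi,rfl|rfl⟩
  -- x₁ = 0
  · exact levee_eq_zero_le (by norm_num)
  · exact levee_eq_zero_le (by norm_num)
  · exact levee_eq_zero_le (by norm_num)
  · rw [levee_eq_mid_neg (by norm_num) (by norm_num)]; norm_num
  · rw [levee_eq_mid_neg (by norm_num) (by norm_num)]; norm_num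
  · exact levee_eq_one (by norm_num) (by norm_num)
  · exact levee_eq_one (by norm_num) (by norm_num)
  · exact levee_eq_one (by norm_num) (by norm_num)
  · rw [levee_eq_mid_pos (by norm_num) (by norm_num)]; norm_num
  · rw [levee_eq_mid_pos (by norm_num) (by norm_num)]; norm_num
  · exact levee_eq_zero_ge (by norm_num)
  · exact levee_eq_zero_ge (by norm_num)
  · exact levee_eq_zero_ge (by norm_num)
  -- x₁ = -ε
  · exact levee_eq_zero_le (by dsimp only; nlinarith)
  · exact levee_eq_zero_le (by dsimp only; nlinarith)
  · exact levee_eq_zero_le (by dsimp only; nlinarith)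
  · exact levee_eq_one (by dsimp only; nlinarith) (by dsimp only; nlinarith)
  · exact levee_eq_one (by dsimp only; nlinarith) (by dsimp only; nlinarith)
  · exact levee_eq_one (by dsimp only; nlinarith) (by dsimp only; nlinarith)
  · exact levee_eq_zero_ge (by dsimp only; nlinarith)
  · exact levee_eq_zero_ge (by dsimp only; nlinarith)
  · exact levee_eq_zero_ge (by dsimp only; nlinarith)
  -- x₁ = ε
  · exact levee_eq_zero_le (by dsimp only; nlinarith)
  · exact levee_eq_zero_le (by dsimp only; nlinarith)
  · exact levee_eq_zero_le (by dsimp only; nlinarith)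
  · exact levee_eq_one (by dsimp only; nlinarith) (by dsimp only; nlinarith)
  · exact levee_eq_one (by dsimp only; nlinarith) (by dsimp only; nlinarith)
  · exact levee_eq_one (by dsimp only; nlinarith) (by dsimp only; nlinarith)
  · exact levee_eq_zero_ge (by dsimp only; nlinarith)
  · exact levee_eq_zero_ge (by dsimp only; nlinarith)
  · exact levee_eq_zero_ge (by dsimp only; nlinarith)
  -- crossing points
  · have hd : 0 < s (i + 1) - s i := sub_pos.mpr (hmono i (i + 1) (lt_add_one i) hi)
    have key : -2 * (s i + s (i + 1)) / (s (i + 1) - s i) - s k * (-4 / (s (i + 1) - s i))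
        = (4 * s k - 2 * (s i + s (i + 1))) / (s (i + 1) - s i) := by
      field_simp; ring
    rcases le_or_gt k i with hki | hki
    · have hs1 : s k ≤ s i := hmono' k i hki (by omega)
      apply levee_eq_zero_le
      dsimp only
      rw [key, div_le_iff₀ hd]; linarith
    · have hs2 : s (i + 1) ≤ s k := hmono' (i + 1) k hki (by omega)
      apply levee_eq_zero_ge
      dsimp only
      rw [key, le_div_iff₀ hd]; linarith
  · have hd : 0 < s (i + 1) - s i := sub_pos.mpr (hmono i (i + 1) (lt_add_one i) hi)
    have key : 2 * (s i + s (i + 1)) / (s (i + 1) - s i) - s k * (4 / (s (i + 1) - s i))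
        = (2 * (s i + s (i + 1)) - 4 * s k) / (s (i + 1) - s i) := by
      field_simp
    rcases le_or_gt k i with hki | hki
    · have hs1 : s k ≤ s i := hmono' k i hki (by omega)
      apply levee_eq_zero_ge
      dsimp only
      rw [key, le_div_iff₀ hd]; linarith
    · have hs2 : s (i + 1) ≤ s k := hmono' (i + 1) k hki (by omega)
      apply levee_eq_zero_le
      dsimp only
      rw [key, div_le_iff₀ hd]; linarith

lemma pt_bound {a b c : ℝ} (h1 : |a| ≤ 1/3) (h2 : |b| ≤ 13/3) (h5 : (5:ℝ) ≤ c) :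
    |a| + |b| ≤ c := by linarith

lemma gadget_bound (ℓ : ℕ) (s : ℕ → ℝ) (ε dmin : ℝ) (hε0 : 0 < ε) (hε : ε ≤ 1/3)
    (hℓ : 0 < ℓ) (hs : ∀ i, i < ℓ → |s i| ≤ 1)
    (hd : ∀ i, i + 1 < ℓ → dmin ≤ s (i + 1) - s i) (hdmin : 0 < dmin) :
    ∀ q ∈ selGadget ℓ s ε, |q.1.1| + |q.1.2| ≤ max 5 (8 / dmin) := by
  have hs0 := abs_le.mp (hs 0 hℓ)
  have hsl := abs_le.mp (hs (ℓ - 1) (by omega))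
  have he0a : -(1/3 : ℝ) ≤ ε * s 0 := by nlinarith
  have he0b : ε * s 0 ≤ 1/3 := by nlinarith
  have hela : -(1/3 : ℝ) ≤ ε * s (ℓ - 1) := by nlinarith
  have helb : ε * s (ℓ - 1) ≤ 1/3 := by nlinarith
  intro q hq
  simp only [selGadget, Set.mem_union, Set.mem_insert_iff, Set.mem_singleton_iff,
    Set.mem_setOf_eq] at hq
  rcases hq with (((rfl|rfl|rfl|rfl|rfl|rfl|rfl|rfl|rfl|rfl|rfl|rfl|rfl)|
    (rfl|rfl|rfl|rfl|rfl|rfl|rfl|rfl|rfl))|(rfl|rfl|rfl|rfl|rfl|rfl|rfl|rfl|rfl))|⟨i,hi,rfl|rfl⟩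
  · dsimp only
    exact pt_bound (abs_le.mpr (by constructor <;> linarith))
      (abs_le.mpr (by constructor <;> linarith)) (le_max_left _ _)
  · dsimp only
    exact pt_bound (abs_le.mpr (by constructor <;> linarith))
      (abs_le.mpr (by constructor <;> linarith)) (le_max_left _ _)
  · dsimp only
    exact pt_bound (abs_le.mpr (by constructor <;> linarith))
      (abs_le.mpr (by constructor <;> linarith)) (le_max_left _ _)
  · dsimp only
    exact pt_bound (abs_le.mpr (by constructor <;> linarith))
      (abs_le.mpr (by constructor <;> linarith)) (le_max_left _ _)
  · dsimp only
    exact pt_bound (abs_le.mpr (by constructor <;> linarith))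
      (abs_le.mpr (by constructor <;> linarith)) (le_max_left _ _)
  · dsimp only
    exact pt_bound (abs_le.mpr (by constructor <;> linarith))
      (abs_le.mpr (by constructor <;> linarith)) (le_max_left _ _)
  · dsimp only
    exact pt_bound (abs_le.mpr (by constructor <;> linarith))
      (abs_le.mpr (by constructor <;> linarith)) (le_max_left _ _)
  · dsimp only
    exact pt_bound (abs_le.mpr (by constructor <;> linarith))
      (abs_le.mpr (by constructor <;> linarith)) (le_max_left _ _)
  · dsimp only
    exact pt_bound (abs_le.mpr (by constructor <;> linarith))
      (abs_le.mpr (by constructor <;> linarith)) (le_max_left _ _)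
  · dsimp only
    exact pt_bound (abs_le.mpr (by constructor <;> linarith))
      (abs_le.mpr (by constructor <;> linarith)) (le_max_left _ _)
  · dsimp only
    exact pt_bound (abs_le.mpr (by constructor <;> linarith))
      (abs_le.mpr (by constructor <;> linarith)) (le_max_left _ _)
  · dsimp only
    exact pt_bound (abs_le.mpr (by constructor <;> linarith))
      (abs_le.mpr (by constructor <;> linarith)) (le_max_left _ _)
  · dsimp only
    exact pt_bound (abs_le.mpr (by constructor <;> linarith))
      (abs_le.mpr (by constructor <;> linarith)) (le_max_left _ _)
  · dsimp only
    exact pt_bound (abs_le.mpr (by constructor <;> linarith))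
      (abs_le.mpr (by constructor <;> linarith)) (le_max_left _ _)
  · dsimp only
    exact pt_bound (abs_le.mpr (by constructor <;> linarith))
      (abs_le.mpr (by constructor <;> linarith)) (le_max_left _ _)
  · dsimp only
    exact pt_bound (abs_le.mpr (by constructor <;> linarith))
      (abs_le.mpr (by constructor <;> linarith)) (le_max_left _ _)
  · dsimp only
    exact pt_bound (abs_le.mpr (by constructor <;> linarith))
      (abs_le.mpr (by constructor <;> linarith)) (le_max_left _ _)
  · dsimp only
    exact pt_bound (abs_le.mpr (by constructor <;> linarith))
      (abs_le.mpr (by constructor <;> linarith)) (le_max_left _ _)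
  · dsimp only
    exact pt_bound (abs_le.mpr (by constructor <;> linarith))
      (abs_le.mpr (by constructor <;> linarith)) (le_max_left _ _)
  · dsimp only
    exact pt_bound (abs_le.mpr (by constructor <;> linarith))
      (abs_le.mpr (by constructor <;> linarith)) (le_max_left _ _)
  · dsimp only
    exact pt_bound (abs_le.mpr (by constructor <;> linarith))
      (abs_le.mpr (by constructor <;> linarith)) (le_max_left _ _)
  · dsimp only
    exact pt_bound (abs_le.mpr (by constructor <;> linarith))
      (abs_le.mpr (by constructor <;> linarith)) (le_max_left _ _)
  · dsimp only
    exact pt_bound (abs_le.mpr (by constructor <;> linarith))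
      (abs_le.mpr (by constructor <;> linarith)) (le_max_left _ _)
  · dsimp only
    exact pt_bound (abs_le.mpr (by constructor <;> linarith))
      (abs_le.mpr (by constructor <;> linarith)) (le_max_left _ _)
  · dsimp only
    exact pt_bound (abs_le.mpr (by constructor <;> linarith))
      (abs_le.mpr (by constructor <;> linarith)) (le_max_left _ _)
  · dsimp only
    exact pt_bound (abs_le.mpr (by constructor <;> linarith))
      (abs_le.mpr (by constructor <;> linarith)) (le_max_left _ _)
  · dsimp only
    exact pt_bound (abs_le.mpr (by constructor <;> linarith))
      (abs_le.mpr (by constructor <;> linarith)) (le_max_left _ _)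
  · dsimp only
    exact pt_bound (abs_le.mpr (by constructor <;> linarith))
      (abs_le.mpr (by constructor <;> linarith)) (le_max_left _ _)
  · dsimp only
    exact pt_bound (abs_le.mpr (by constructor <;> linarith))
      (abs_le.mpr (by constructor <;> linarith)) (le_max_left _ _)
  · dsimp only
    exact pt_bound (abs_le.mpr (by constructor <;> linarith))
      (abs_le.mpr (by constructor <;> linarith)) (le_max_left _ _)
  · dsimp only
    exact pt_bound (abs_le.mpr (by constructor <;> linarith))
      (abs_le.mpr (by constructor <;> linarith)) (le_max_left _ _)
  · have hd1 := hd i hi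
    have hd' : 0 < s (i + 1) - s i := lt_of_lt_of_le hdmin hd1
    have hb1 := abs_le.mp (hs i (by omega))
    have hb2 := abs_le.mp (hs (i + 1) (by omega))
    refine le_trans ?_ (le_max_right _ _)
    dsimp only
    rw [abs_div, abs_div, abs_of_pos hd', ← add_div, div_le_div_iff₀ hd' hdmin]
    have h2 : |(-2 : ℝ) * (s i + s (i + 1))| ≤ 4 := by
      rw [abs_mul]
      have : |s i + s (i + 1)| ≤ 2 := le_trans (abs_add_le _ _)
        (by have := hs i (by omega); have := hs (i + 1) (by omega); linarith)
      rw [(by norm_num : |(-2 : ℝ)| = 2)]; linarith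
    rw [(by norm_num : |(-4 : ℝ)| = 4)]
    nlinarith [abs_nonneg ((-2 : ℝ) * (s i + s (i + 1)))]
  · have hd1 := hd i hi
    have hd' : 0 < s (i + 1) - s i := lt_of_lt_of_le hdmin hd1
    have hb1 := abs_le.mp (hs i (by omega))
    have hb2 := abs_le.mp (hs (i + 1) (by omega))
    refine le_trans ?_ (le_max_right _ _)
    dsimp only
    rw [abs_div, abs_div, abs_of_pos hd', ← add_div, div_le_div_iff₀ hd' hdmin]
    have h2 : |(2 : ℝ) * (s i + s (i + 1))| ≤ 4 := by
      rw [abs_mul]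
      have : |s i + s (i + 1)| ≤ 2 := le_trans (abs_add_le _ _)
        (by have := hs i (by omega); have := hs (i + 1) (by omega); linarith)
      rw [(by norm_num : |(2 : ℝ)| = 2)]; linarith
    rw [(by norm_num : |(4 : ℝ)| = 4)]
    nlinarith [abs_nonneg ((2 : ℝ) * (s i + s (i + 1)))]


lemma slopeG_bounds {m j r : ℕ} (hm : 1 ≤ m) (hj1 : 1 ≤ j) (hj2 : j ≤ m)
    (hr1 : 1 ≤ r) (hr2 : r ≤ 3) : -1 ≤ slopeG m j r ∧ slopeG m j r ≤ 0 := by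
  have hm' : (1 : ℝ) ≤ m := by exact_mod_cast hm
  have hj1' : (1 : ℝ) ≤ j := by exact_mod_cast hj1
  have hj2' : (j : ℝ) ≤ m := by exact_mod_cast hj2
  have hr1' : (1 : ℝ) ≤ r := by exact_mod_cast hr1
  have hr2' : (r : ℝ) ≤ 3 := by exact_mod_cast hr2
  have hX0 : (0 : ℝ) ≤ 2 * (j : ℝ) - 3 + r := by linarith
  have hX2 : 2 * (j : ℝ) - 3 + r ≤ 2 * m := by linarith
  have hδ : (0 : ℝ) < 1 / (2 * m) := by positivity
  constructor
  · have := mul_nonneg hX0 hδ.le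
    rw [slopeG]; linarith
  · rw [slopeG]
    have h1 : (2 * (j : ℝ) - 3 + r) * (1 / (2 * m)) ≤ (2 * m) * (1 / (2 * m)) :=
      mul_le_mul_of_nonneg_right hX2 hδ.le
    have h2 : (2 * (m : ℝ)) * (1 / (2 * m)) = 1 := by field_simp
    linarith

lemma slopeG_abs {m j r : ℕ} (hm : 1 ≤ m) (hj1 : 1 ≤ j) (hj2 : j ≤ m)
    (hr1 : 1 ≤ r) (hr2 : r ≤ 3) : |slopeG m j r| ≤ 1 := by
  obtain ⟨h1, h2⟩ := slopeG_bounds hm hj1 hj2 hr1 hr2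
  rw [abs_le]; exact ⟨h1, by linarith⟩

lemma mul_abs_le {s a : ℝ} (h : |s| ≤ 1) : |s * a| ≤ |a| := by
  rw [abs_mul]
  exact mul_le_of_le_one_left (abs_nonneg a) h

lemma slopeG_diff (m j r j' r' : ℕ) :
    slopeG m j r - slopeG m j' r' =
      ((2 * (j : ℝ) + r) - (2 * (j' : ℝ) + r')) * (1 / (2 * (m : ℝ))) := by
  unfold slopeG; ring

/-- If `T` selects exactly one literal per clause (the `r_j`-th one), then the corresponding sum
of levees fits every labeled data point of the constructed data set `X_F`. -/
theorem solution_fits_XF (m n : ℕ) (hm : 1 ≤ m) (hn : 1 ≤ n)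
    (v : ℕ → ℕ → ℕ)
    (hv : ∀ j, 1 ≤ j → j ≤ m → ∀ r, 1 ≤ r → r ≤ 3 → 1 ≤ v j r ∧ v j r ≤ n)
    (hvdist : ∀ j, 1 ≤ j → j ≤ m → ∀ r r', 1 ≤ r → r ≤ 3 → 1 ≤ r' → r' ≤ 3 → r ≠ r' →
      v j r ≠ v j r')
    (T : Finset ℕ) (hT : T ⊆ Finset.Icc 1 n)
    (rr : ℕ → ℕ)
    (hrr : ∀ j, 1 ≤ j → j ≤ m →
      1 ≤ rr j ∧ rr j ≤ 3 ∧ v j (rr j) ∈ T ∧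
        ∀ r, 1 ≤ r → r ≤ 3 → v j r ∈ T → r = rr j) :
    ∀ q ∈ XF m n v,
      ((∑ i ∈ T, levee (-1) q.1.1 (q.1.2 + (i : ℝ) * DeltaG m)) +
        (∑ i ∈ Finset.Icc 1 n \ T, levee 1 q.1.1 (q.1.2 + (i : ℝ) * DeltaG m)) +
        ∑ j ∈ Finset.Icc 1 m, levee (slopeG m j (rr j)) q.1.1 (q.1.2 - (j : ℝ) * DeltaG m))
      = q.2 := by
  have hm' : (1 : ℝ) ≤ m := by exact_mod_cast hm
  have hm0 : (m : ℝ) ≠ 0 := by positivity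
  have hΔdef : DeltaG m = 16 * (m : ℝ) + 6 := rfl
  have hΔ22 : 22 ≤ DeltaG m := by rw [hΔdef]; linarith
  have hΔpos : 0 < DeltaG m := by linarith
  have hδpos : (0 : ℝ) < 1 / (2 * m) := by positivity
  intro q hq
  rcases hq with (hq | hq) | hq
  · -- clause gadget
    simp only [Set.mem_iUnion] at hq
    obtain ⟨j₀, hj₀, hq⟩ := hq
    rw [Set.mem_Icc] at hj₀
    simp only [selGadgetOff, Set.mem_image] at hq
    obtain ⟨⟨⟨a, b⟩, y⟩, hp, rfl⟩ := hq
    dsimp only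
    -- gadget hypotheses
    have hmono3 : ∀ i i' : ℕ, i < i' → i' < 3 → slopeG m j₀ (i + 1) < slopeG m j₀ (i' + 1) := by
      intro i i' h1 h2
      have : slopeG m j₀ (i' + 1) - slopeG m j₀ (i + 1)
          = (((i' : ℝ)) - (i : ℝ)) * (1 / (2 * m)) := by
        rw [slopeG_diff]; push_cast; ring
      have hii : (i : ℝ) + 1 ≤ (i' : ℝ) := by exact_mod_cast h1
      nlinarith
    have hsabs : ∀ i : ℕ, i < 3 → |slopeG m j₀ (i + 1)| ≤ 1 := by
      intro i h
      exact slopeG_abs hm hj₀.1 hj₀.2 (by omega) (by omega)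
    have hbd := gadget_bound 3 (fun i => slopeG m j₀ (i + 1)) (1/3) (1 / (2 * m))
      (by norm_num) (by norm_num) (by norm_num) hsabs
      (by
        intro i hi
        have : slopeG m j₀ (i + 1 + 1) - slopeG m j₀ (i + 1) = 1 / (2 * m) := by
          rw [slopeG_diff]; push_cast; ring
        linarith)
      hδpos ((a, b), y) hp
    have h16 : (8 : ℝ) / (1 / (2 * m)) = 16 * m := by field_simp; ring
    have hab : |a| + |b| ≤ 16 * m := by
      rw [h16] at hbd
      exact le_trans hbd (max_le (by linarith) le_rfl)
    have habsa := abs_nonneg a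
    have habsb := abs_nonneg b
    have hla1 := le_abs_self a
    have hla2 := neg_abs_le a
    have hlb1 := le_abs_self b
    have hlb2 := neg_abs_le b
    have e1 : (∑ i ∈ T, levee (-1) a (b + (j₀ : ℝ) * DeltaG m + (i : ℝ) * DeltaG m)) = 0 := by
      apply Finset.sum_eq_zero
      intro i hi
      have hi1 : (1 : ℝ) ≤ (i : ℝ) := by
        exact_mod_cast (Finset.mem_Icc.mp (hT hi)).1
      have hj1 : (1 : ℝ) ≤ (j₀ : ℝ) := by exact_mod_cast hj₀.1
      apply levee_eq_zero_ge
      nlinarith [mul_le_mul_of_nonneg_right hi1 hΔpos.le,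
        mul_le_mul_of_nonneg_right hj1 hΔpos.le]
    have e2 : (∑ i ∈ Finset.Icc 1 n \ T,
        levee 1 a (b + (j₀ : ℝ) * DeltaG m + (i : ℝ) * DeltaG m)) = 0 := by
      apply Finset.sum_eq_zero
      intro i hi
      have hi1 : (1 : ℝ) ≤ (i : ℝ) := by
        exact_mod_cast (Finset.mem_Icc.mp (Finset.mem_sdiff.mp hi).1).1
      have hj1 : (1 : ℝ) ≤ (j₀ : ℝ) := by exact_mod_cast hj₀.1
      apply levee_eq_zero_ge
      nlinarith [mul_le_mul_of_nonneg_right hi1 hΔpos.le,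
        mul_le_mul_of_nonneg_right hj1 hΔpos.le]
    have e3 : (∑ j ∈ Finset.Icc 1 m,
        levee (slopeG m j (rr j)) a (b + (j₀ : ℝ) * DeltaG m - (j : ℝ) * DeltaG m)) = y := by
      rw [Finset.sum_eq_single_of_mem j₀ (Finset.mem_Icc.mpr hj₀)]
      · have hb : b + (j₀ : ℝ) * DeltaG m - (j₀ : ℝ) * DeltaG m = b := by ring
        rw [hb]
        obtain ⟨hr1, hr3, _, _⟩ := hrr j₀ hj₀.1 hj₀.2
        have hfit := gadget_fit 3 (rr j₀ - 1) (fun i => slopeG m j₀ (i + 1)) (1/3)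
          (by norm_num) (by omega) hmono3
          (by
            have h1 : slopeG m j₀ (2 + 1) - slopeG m j₀ (0 + 1) = 2 * (1 / (2 * m)) := by
              rw [slopeG_diff]; push_cast; ring
            show (1/3 : ℝ) * (slopeG m j₀ (3 - 1 + 1) - slopeG m j₀ (0 + 1)) ≤ 2
            norm_num at h1 ⊢
            have hinv : (m : ℝ)⁻¹ ≤ 1 := by
              rw [inv_le_one_iff₀]; right; linarith
            nlinarith)
          (by
            show (1/3 : ℝ) * |slopeG m j₀ (rr j₀ - 1 + 1)| ≤ 1
            have : rr j₀ - 1 + 1 = rr j₀ := by omega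
            rw [this]
            have := slopeG_abs hm hj₀.1 hj₀.2 hr1 hr3
            linarith)
          ((a, b), y) hp
        simp only at hfit
        rwa [show rr j₀ - 1 + 1 = rr j₀ from by omega] at hfit
      · intro j hj hne
        rw [Finset.mem_Icc] at hj
        obtain ⟨hr1, hr3, _, _⟩ := hrr j hj.1 hj.2
        have hs' := mul_abs_le (slopeG_abs hm hj.1 hj.2 hr1 hr3) (a := a)
        have hs1 := le_abs_self (slopeG m j (rr j) * a)
        have hs2 := neg_abs_le (slopeG m j (rr j) * a)
        rcases lt_or_gt_of_ne hne with h | h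
        · -- j < j₀
          have hc : (j : ℝ) + 1 ≤ (j₀ : ℝ) := by exact_mod_cast h
          apply levee_eq_zero_ge
          nlinarith [mul_le_mul_of_nonneg_right hc hΔpos.le]
        · have hc : (j₀ : ℝ) + 1 ≤ (j : ℝ) := by exact_mod_cast h
          apply levee_eq_zero_le
          nlinarith [mul_le_mul_of_nonneg_right hc hΔpos.le]
    rw [e1, e2, e3]; ring
  · -- variable gadget
    simp only [Set.mem_iUnion] at hq
    obtain ⟨i₀, hi₀, hq⟩ := hq
    rw [Set.mem_Icc] at hi₀
    simp only [selGadgetOff, Set.mem_image] at hq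
    obtain ⟨⟨⟨a, b⟩, y⟩, hp, rfl⟩ := hq
    dsimp only
    have hmono2 : ∀ i i' : ℕ, i < i' → i' < 2 → varSlopes i < varSlopes i' := by
      intro i i' h1 h2
      have hi : i = 0 := by omega
      have hi' : i' = 1 := by omega
      subst hi hi'
      norm_num [varSlopes]
    have hbd := gadget_bound 2 varSlopes (1/3) 2
      (by norm_num) (by norm_num) (by norm_num)
      (by intro i _; unfold varSlopes; split <;> norm_num)
      (by intro i hi; simp only [show i = 0 from by omega, varSlopes]; norm_num)
      (by norm_num) ((a, b), y) hp
    have hab : |a| + |b| ≤ 5 := le_trans hbd (by norm_num)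
    have habsa := abs_nonneg a
    have habsb := abs_nonneg b
    have hla1 := le_abs_self a
    have hla2 := neg_abs_le a
    have hlb1 := le_abs_self b
    have hlb2 := neg_abs_le b
    have hi₀1 : (1 : ℝ) ≤ (i₀ : ℝ) := by exact_mod_cast hi₀.1
    have hzero : ∀ i : ℕ, i ≠ i₀ → 1 ≤ i → ∀ s : ℝ, |s| ≤ 1 →
        levee s a (b + -((i₀ : ℝ) * DeltaG m) + (i : ℝ) * DeltaG m) = 0 := by
      intro i hne hi1 s hs
      have hsa := mul_abs_le hs (a := a)
      have hs1 := le_abs_self (s * a)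
      have hs2 := neg_abs_le (s * a)
      rcases lt_or_gt_of_ne hne with h | h
      · have hc : (i : ℝ) + 1 ≤ (i₀ : ℝ) := by exact_mod_cast h
        apply levee_eq_zero_le
        nlinarith [mul_le_mul_of_nonneg_right hc hΔpos.le]
      · have hc : (i₀ : ℝ) + 1 ≤ (i : ℝ) := by exact_mod_cast h
        apply levee_eq_zero_ge
        nlinarith [mul_le_mul_of_nonneg_right hc hΔpos.le]
    have e3 : (∑ j ∈ Finset.Icc 1 m,
        levee (slopeG m j (rr j)) a (b + -((i₀ : ℝ) * DeltaG m) - (j : ℝ) * DeltaG m)) = 0 := by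
      apply Finset.sum_eq_zero
      intro j hj
      rw [Finset.mem_Icc] at hj
      obtain ⟨hr1, hr3, _, _⟩ := hrr j hj.1 hj.2
      have hsa := mul_abs_le (slopeG_abs hm hj.1 hj.2 hr1 hr3) (a := a)
      have hs1 := le_abs_self (slopeG m j (rr j) * a)
      have hs2 := neg_abs_le (slopeG m j (rr j) * a)
      have hj1 : (1 : ℝ) ≤ (j : ℝ) := by exact_mod_cast hj.1
      apply levee_eq_zero_le
      nlinarith [mul_le_mul_of_nonneg_right hj1 hΔpos.le,
        mul_le_mul_of_nonneg_right hi₀1 hΔpos.le]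
    have hcancel : b + -((i₀ : ℝ) * DeltaG m) + (i₀ : ℝ) * DeltaG m = b := by ring
    by_cases hiT : i₀ ∈ T
    · have e1 : (∑ i ∈ T, levee (-1) a (b + -((i₀ : ℝ) * DeltaG m) + (i : ℝ) * DeltaG m)) = y := by
        rw [Finset.sum_eq_single_of_mem i₀ hiT]
        · rw [hcancel]
          have hfit := gadget_fit 2 0 varSlopes (1/3) (by norm_num) (by norm_num) hmono2
            (by norm_num [varSlopes]) (by norm_num [varSlopes]) ((a, b), y) hp
          simpa [varSlopes] using hfit
        · intro i hi hne
          exact hzero i hne (Finset.mem_Icc.mp (hT hi)).1 (-1) (by norm_num)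
      have e2 : (∑ i ∈ Finset.Icc 1 n \ T,
          levee 1 a (b + -((i₀ : ℝ) * DeltaG m) + (i : ℝ) * DeltaG m)) = 0 := by
        apply Finset.sum_eq_zero
        intro i hi
        rw [Finset.mem_sdiff, Finset.mem_Icc] at hi
        exact hzero i (fun h => hi.2 (h ▸ hiT)) hi.1.1 1 (by norm_num)
      rw [e1, e2, e3]; ring
    · have e1 : (∑ i ∈ T, levee (-1) a (b + -((i₀ : ℝ) * DeltaG m) + (i : ℝ) * DeltaG m)) = 0 := by
        apply Finset.sum_eq_zero
        intro i hi
        exact hzero i (fun h => hiT (h ▸ hi)) (Finset.mem_Icc.mp (hT hi)).1 (-1) (by norm_num)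
      have e2 : (∑ i ∈ Finset.Icc 1 n \ T,
          levee 1 a (b + -((i₀ : ℝ) * DeltaG m) + (i : ℝ) * DeltaG m)) = y := by
        rw [Finset.sum_eq_single_of_mem i₀
          (Finset.mem_sdiff.mpr ⟨Finset.mem_Icc.mpr hi₀, hiT⟩)]
        · rw [hcancel]
          have hfit := gadget_fit 2 1 varSlopes (1/3) (by norm_num) (by norm_num) hmono2
            (by norm_num [varSlopes]) (by norm_num [varSlopes]) ((a, b), y) hp
          simpa [varSlopes] using hfit
        · intro i hi hne
          rw [Finset.mem_sdiff, Finset.mem_Icc] at hi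
          exact hzero i hne hi.1.1 1 (by norm_num)
      rw [e1, e2, e3]; ring
  · -- p-points
    obtain ⟨j, hj1, hj2, r, hr1, hr3, rfl⟩ := hq
    obtain ⟨hi1, hin⟩ := hv j hj1 hj2 r hr1 hr3
    obtain ⟨hrj1, hrj3, hrjT, hrjU⟩ := hrr j hj1 hj2
    obtain ⟨hsb1, hsb2⟩ := slopeG_bounds hm hj1 hj2 hr1 hr3
    have hj1' : (1 : ℝ) ≤ (j : ℝ) := by exact_mod_cast hj1
    have hi1' : (1 : ℝ) ≤ ((v j r : ℕ) : ℝ) := by exact_mod_cast hi1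
    simp only [pPoint]
    set A := DeltaG m * (((v j r : ℕ) : ℝ) + (j : ℝ)) / (1 - slopeG m j r) with hAdef
    have hden : (1 : ℝ) ≤ 1 - slopeG m j r := by linarith
    have hden2 : 1 - slopeG m j r ≤ 2 := by linarith
    have hA : A * (1 - slopeG m j r) = DeltaG m * (((v j r : ℕ) : ℝ) + (j : ℝ)) :=
      div_mul_cancel₀ _ (by linarith)
    have hDij : 2 * DeltaG m ≤ DeltaG m * (((v j r : ℕ) : ℝ) + (j : ℝ)) := by
      nlinarith
    have hApos : 0 < A := by nlinarith
    have hA2 : DeltaG m * (((v j r : ℕ) : ℝ) + (j : ℝ)) ≤ 2 * A := by nlinarith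
    have hAΔ : DeltaG m ≤ A := by nlinarith
    have hΔδ : 2 ≤ DeltaG m * (1 / (2 * (m : ℝ))) := by
      rw [hΔdef, mul_one_div, le_div_iff₀ (by positivity)]
      linarith
    -- sum over T is handled uniformly except single index; first, common facts
    have e1 : (∑ i ∈ T, levee (-1) A
        (A - DeltaG m * ((v j r : ℕ) : ℝ) + (i : ℝ) * DeltaG m)) = 0 := by
      apply Finset.sum_eq_zero
      intro i' hi'
      have hi'1 : (1 : ℝ) ≤ (i' : ℝ) := by
        exact_mod_cast (Finset.mem_Icc.mp (hT hi')).1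
      apply levee_eq_zero_ge
      nlinarith [mul_le_mul_of_nonneg_right hi'1 hΔpos.le,
        mul_le_mul_of_nonneg_right hj1' hΔpos.le]
    have hzero2 : ∀ i' : ℕ, i' ≠ v j r →
        levee 1 A (A - DeltaG m * ((v j r : ℕ) : ℝ) + (i' : ℝ) * DeltaG m) = 0 := by
      intro i' hne
      rcases lt_or_gt_of_ne hne with h | h
      · have hc : (i' : ℝ) + 1 ≤ ((v j r : ℕ) : ℝ) := by exact_mod_cast h
        apply levee_eq_zero_le
        nlinarith [mul_le_mul_of_nonneg_right hc hΔpos.le]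
      · have hc : ((v j r : ℕ) : ℝ) + 1 ≤ (i' : ℝ) := by exact_mod_cast h
        apply levee_eq_zero_ge
        nlinarith [mul_le_mul_of_nonneg_right hc hΔpos.le]
    have hside : ∀ j' ∈ Finset.Icc 1 m, j' ≠ j →
        levee (slopeG m j' (rr j')) A
          (A - DeltaG m * ((v j r : ℕ) : ℝ) - (j' : ℝ) * DeltaG m) = 0 := by
      intro j' hj' hne
      rw [Finset.mem_Icc] at hj'
      obtain ⟨hr'1, hr'3, _, _⟩ := hrr j' hj'.1 hj'.2
      have hr'1' : (1 : ℝ) ≤ ((rr j' : ℕ) : ℝ) := by exact_mod_cast hr'1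
      have hr'3' : ((rr j' : ℕ) : ℝ) ≤ 3 := by exact_mod_cast hr'3
      have hr1' : (1 : ℝ) ≤ (r : ℝ) := by exact_mod_cast hr1
      have hr3' : (r : ℝ) ≤ 3 := by exact_mod_cast hr3
      have hdiff := slopeG_diff m j r j' (rr j')
      rcases lt_or_gt_of_ne hne with h | h
      · -- j' < j : argument ≥ 2
        have hc : (j' : ℝ) + 1 ≤ (j : ℝ) := by exact_mod_cast h
        have hnum : (0 : ℝ) ≤ (2 * (j : ℝ) + r) - (2 * (j' : ℝ) + rr j') := by linarith
        have hprod : 0 ≤ A * (slopeG m j r - slopeG m j' (rr j')) := by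
          rw [hdiff]
          exact mul_nonneg hApos.le (mul_nonneg hnum hδpos.le)
        apply levee_eq_zero_ge
        nlinarith [mul_le_mul_of_nonneg_right hc hΔpos.le]
      · have hc : (j : ℝ) + 1 ≤ (j' : ℝ) := by exact_mod_cast h
        have hnum : (0 : ℝ) ≤ (2 * (j' : ℝ) + rr j') - (2 * (j : ℝ) + r) := by linarith
        have hprod : 0 ≤ A * (slopeG m j' (rr j') - slopeG m j r) := by
          have hdiff2 := slopeG_diff m j' (rr j') j r
          rw [hdiff2]
          exact mul_nonneg hApos.le (mul_nonneg hnum hδpos.le)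
        apply levee_eq_zero_le
        nlinarith [mul_le_mul_of_nonneg_right hc hΔpos.le]
    by_cases hiT : v j r ∈ T
    · have hreq : r = rr j := hrjU r hr1 hr3 hiT
      have e2 : (∑ i ∈ Finset.Icc 1 n \ T, levee 1 A
          (A - DeltaG m * ((v j r : ℕ) : ℝ) + (i : ℝ) * DeltaG m)) = 0 := by
        apply Finset.sum_eq_zero
        intro i' hi'
        rw [Finset.mem_sdiff] at hi'
        exact hzero2 i' (fun h => hi'.2 (h ▸ hiT))
      have e3 : (∑ j' ∈ Finset.Icc 1 m, levee (slopeG m j' (rr j')) A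
          (A - DeltaG m * ((v j r : ℕ) : ℝ) - (j' : ℝ) * DeltaG m)) = 1 := by
        rw [Finset.sum_eq_single_of_mem j (Finset.mem_Icc.mpr ⟨hj1, hj2⟩)]
        · rw [← hreq]
          exact levee_eq_one (by nlinarith) (by nlinarith)
        · exact hside
      rw [e1, e2, e3]; ring
    · have hrne : r ≠ rr j := fun h => hiT (by rw [show v j r = v j (rr j) from by rw [h]]; exact hrjT)
      have e2 : (∑ i ∈ Finset.Icc 1 n \ T, levee 1 A
          (A - DeltaG m * ((v j r : ℕ) : ℝ) + (i : ℝ) * DeltaG m)) = 1 := by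
        rw [Finset.sum_eq_single_of_mem (v j r)
          (Finset.mem_sdiff.mpr ⟨Finset.mem_Icc.mpr ⟨hi1, hin⟩, hiT⟩)]
        · exact levee_eq_one (by nlinarith) (by nlinarith)
        · intro i' _ hne
          exact hzero2 i' hne
      have e3 : (∑ j' ∈ Finset.Icc 1 m, levee (slopeG m j' (rr j')) A
          (A - DeltaG m * ((v j r : ℕ) : ℝ) - (j' : ℝ) * DeltaG m)) = 0 := by
        apply Finset.sum_eq_zero
        intro j' hj'
        by_cases hne : j' = j
        · subst hne
          have hdiff := slopeG_diff m j' r j' (rr j')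
          have hr'1' : (1 : ℝ) ≤ ((rr j' : ℕ) : ℝ) := by exact_mod_cast hrj1
          have hr'3' : ((rr j' : ℕ) : ℝ) ≤ 3 := by exact_mod_cast hrj3
          have hr1' : (1 : ℝ) ≤ (r : ℝ) := by exact_mod_cast hr1
          have hr3' : (r : ℝ) ≤ 3 := by exact_mod_cast hr3
          rcases lt_or_gt_of_ne hrne with h | h
          · -- r < rr j : slope difference ≥ δ, argument ≤ -2
            have hc : (r : ℝ) + 1 ≤ ((rr j' : ℕ) : ℝ) := by exact_mod_cast h
            have hsd : DeltaG m * (1 / (2 * (m : ℝ))) ≤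
                A * (slopeG m j' (rr j') - slopeG m j' r) := by
              have hd2 := slopeG_diff m j' (rr j') j' r
              rw [hd2]
              have h1 : (1 : ℝ) ≤ (2 * (j' : ℝ) + rr j') - (2 * (j' : ℝ) + r) := by linarith
              have := mul_le_mul hAΔ (mul_le_mul h1 le_rfl hδpos.le (by linarith))
                (by positivity) hApos.le
              calc DeltaG m * (1 / (2 * (m : ℝ)))
                  = DeltaG m * (1 * (1 / (2 * (m : ℝ)))) := by ring
                _ ≤ A * (((2 * (j' : ℝ) + rr j') - (2 * (j' : ℝ) + r)) * (1 / (2 * (m : ℝ)))) :=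
                    this
            apply levee_eq_zero_le
            nlinarith
          · have hc : ((rr j' : ℕ) : ℝ) + 1 ≤ (r : ℝ) := by exact_mod_cast h
            have hsd : DeltaG m * (1 / (2 * (m : ℝ))) ≤
                A * (slopeG m j' r - slopeG m j' (rr j')) := by
              rw [hdiff]
              have h1 : (1 : ℝ) ≤ (2 * (j' : ℝ) + r) - (2 * (j' : ℝ) + rr j') := by linarith
              have := mul_le_mul hAΔ (mul_le_mul h1 le_rfl hδpos.le (by linarith))
                (by positivity) hApos.le
              calc DeltaG m * (1 / (2 * (m : ℝ)))
                  = DeltaG m * (1 * (1 / (2 * (m : ℝ)))) := by ring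
                _ ≤ A * (((2 * (j' : ℝ) + r) - (2 * (j' : ℝ) + rr j')) * (1 / (2 * (m : ℝ)))) :=
                    this
            apply levee_eq_zero_ge
            nlinarith
        · exact hside j' hj' hne
      rw [e1, e2, e3]; ring
end
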